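/- arXiv:2601.22855 — 7 statements merged into one kernel-verified Lean document; each statement's English description precedes it below -/
import Mathlib

section
/- Let (Ω,𝓕,ℙ) be a probability space with a filtration (𝓕_n)_{n≥0}, and let (X_n)_{n≥0} be an integer-valued process adapted to (𝓕_n)_{n≥0} such that almost surely X_0 = 1 and X_{n+1} ∈ {X_n, X_n + 1} for all n ≥ 0. Write X̂_n = X_n/(n+1). Suppose there is a function G : [0,1] → [0,1] such that for all n ≥ 0, ℙ(X_{n+1} = X_n + 1 | 𝓕_n) ≥ G(X̂_n) almost surely. If there exist c > 0 and ε > 0 such that G(x) > (1+ε)·x for all x ∈ (0,c), then almost surely liminf_{n→∞} X̂_n ≥ c. -/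
open Filter Topology MeasureTheory
open scoped NNReal ENNReal

namespace Statement1Aux

lemma log_diff_ge (a : ℝ) (ha : 0 < a) : (a+1)⁻¹ ≤ Real.log (a+1) - Real.log a := by
  have h := Real.log_le_sub_one_of_pos (x := a/(a+1)) (by positivity)
  rw [Real.log_div (ne_of_gt ha) (by positivity)] at h
  have h2 : a/(a+1) - 1 = -((a+1)⁻¹) := by field_simp; ring
  rw [h2] at h
  linarith

lemma log_diff_le (a : ℝ) (ha : 0 < a) : Real.log (a+1) - Real.log a ≤ a⁻¹ := by
  have h := Real.log_le_sub_one_of_pos (x := (a+1)/a) (by positivity)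
  rw [Real.log_div (by positivity) (ne_of_gt ha)] at h
  have h2 : (a+1)/a - 1 = a⁻¹ := by field_simp; ring
  rw [h2] at h
  linarith

lemma harm_sum (s t : ℕ) (hst : s ≤ t) :
    Real.log ((t:ℝ)+1) - Real.log ((s:ℝ)+1) ≤ ∑ k ∈ Finset.Ico s t, (((k:ℝ))+1)⁻¹ := by
  induction t, hst using Nat.le_induction with
  | base => simp
  | succ t hst ih =>
    rw [Finset.sum_Ico_succ_top hst]
    have h := log_diff_le ((t:ℝ)+1) (by positivity)
    push_cast
    push_cast at ih h
    linarith

lemma chi_sum (x : ℕ → ℕ) (hx1 : ∀ k, 1 ≤ x k)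
    (hstep : ∀ k, x (k+1) = x k ∨ x (k+1) = x k + 1) (s t : ℕ) (hst : s ≤ t) :
    ∑ k ∈ Finset.Ico s t, (if x (k+1) = x k + 1 then (1:ℝ) else 0) * ((x k : ℝ))⁻¹
      ≤ 2*((x s:ℝ))⁻¹ + (Real.log (x t) - Real.log (x s)) - ((x t:ℝ))⁻¹ := by
  induction t, hst using Nat.le_induction with
  | base =>
    simp only [Finset.Ico_self, Finset.sum_empty]
    have : (0:ℝ) < (x s : ℝ) := by exact_mod_cast hx1 s
    have h1 : ((x s:ℝ))⁻¹ ≤ 2*((x s:ℝ))⁻¹ := by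
      have : 0 ≤ ((x s:ℝ))⁻¹ := by positivity
      linarith
    linarith
  | succ t hst ih =>
    rw [Finset.sum_Ico_succ_top hst]
    rcases hstep t with h | h
    · have hif : (if x (t+1) = x t + 1 then (1:ℝ) else 0) = 0 := by
        rw [if_neg]; omega
      rw [hif, h]
      simpa using ih
    · have hif : (if x (t+1) = x t + 1 then (1:ℝ) else 0) = 1 := by rw [if_pos h]
      rw [hif, h]
      have hxt : (0:ℝ) < (x t : ℝ) := by exact_mod_cast hx1 t
      have hlog := log_diff_ge ((x t : ℝ)) hxt
      push_cast
      push_cast at ih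
      linarith

lemma key (x : ℕ → ℕ) (q : ℕ → ℝ) (c ε : ℝ) (hε : 0 < ε)
    (hx1 : ∀ k, 1 ≤ x k) (hstep : ∀ k, x (k+1) = x k ∨ x (k+1) = x k + 1)
    (hq0 : ∀ k, 0 ≤ q k)
    (hdrift : ∀ k, (x k : ℝ)/((k:ℝ)+1) < c → (1+ε) * ((x k:ℝ)/((k:ℝ)+1)) ≤ q k)
    (s t : ℕ) (hst : s ≤ t) (hbelow : ∀ k, s ≤ k → k < t → (x k:ℝ)/((k:ℝ)+1) < c) :
    ∑ k ∈ Finset.Ico s t, ((if x (k+1) = x k + 1 then (1:ℝ) else 0) - q k) * ((x k : ℝ))⁻¹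
      ≤ 2*((x s:ℝ))⁻¹ + (Real.log (x t) - Real.log (x s))
        - (1+ε)*(Real.log ((t:ℝ)+1) - Real.log ((s:ℝ)+1)) := by
  have hsplit : ∑ k ∈ Finset.Ico s t, ((if x (k+1) = x k + 1 then (1:ℝ) else 0) - q k) * ((x k : ℝ))⁻¹
      = (∑ k ∈ Finset.Ico s t, (if x (k+1) = x k + 1 then (1:ℝ) else 0) * ((x k : ℝ))⁻¹)
        - ∑ k ∈ Finset.Ico s t, q k * ((x k : ℝ))⁻¹ := by
    rw [← Finset.sum_sub_distrib]
    congr 1; ext k; ring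
  have h1 := chi_sum x hx1 hstep s t hst
  have h2 : (1+ε) * ∑ k ∈ Finset.Ico s t, (((k:ℝ))+1)⁻¹
      ≤ ∑ k ∈ Finset.Ico s t, q k * ((x k : ℝ))⁻¹ := by
    rw [Finset.mul_sum]
    apply Finset.sum_le_sum
    intro k hk
    rw [Finset.mem_Ico] at hk
    have hxk : (0:ℝ) < (x k : ℝ) := by exact_mod_cast hx1 k
    have hb := hbelow k hk.1 hk.2
    have hd := hdrift k hb
    have heq : (1+ε) * (((k:ℝ))+1)⁻¹ = ((1+ε) * ((x k:ℝ)/((k:ℝ)+1))) * ((x k : ℝ))⁻¹ := by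
      field_simp
    rw [heq]
    apply mul_le_mul_of_nonneg_right hd (by positivity)
  have h3 := harm_sum s t hst
  have h4 : (1+ε)*(Real.log ((t:ℝ)+1) - Real.log ((s:ℝ)+1))
      ≤ (1+ε) * ∑ k ∈ Finset.Ico s t, (((k:ℝ))+1)⁻¹ := by
    apply mul_le_mul_of_nonneg_left h3 (by linarith)
  have hxt : (0:ℝ) < (x t : ℝ) := by exact_mod_cast hx1 t
  have : (0:ℝ) ≤ ((x t:ℝ))⁻¹ := by positivity
  rw [hsplit]
  linarith



lemma path_sq (x : ℕ → ℕ) (hx0 : x 0 = 1)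
    (hstep : ∀ k, x (k+1) = x k ∨ x (k+1) = x k + 1) (n : ℕ) :
    ∑ k ∈ Finset.range n, (if x (k+1) = x k + 1 then (1:ℝ) else 0)
      * ((x k:ℝ))⁻¹ * ((x k:ℝ))⁻¹ ≤ 2 - 2*((x n:ℝ))⁻¹ := by
  have hmono : Monotone x := monotone_nat_of_le_succ (fun k => by rcases hstep k with h|h <;> omega)
  have hx1 : ∀ k, 1 ≤ x k := fun k => by have := hmono (Nat.zero_le k); omega
  induction n with
  | zero => simp [hx0]
  | succ n ih =>
    rw [Finset.sum_range_succ]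
    rcases hstep n with h | h
    · have hif : (if x (n+1) = x n + 1 then (1:ℝ) else 0) = 0 := by rw [if_neg]; omega
      rw [hif, h]; simpa using ih
    · have hif : (if x (n+1) = x n + 1 then (1:ℝ) else 0) = 1 := by rw [if_pos h]
      rw [hif, h]
      have hy : (1:ℝ) ≤ (x n : ℝ) := by exact_mod_cast hx1 n
      have hy0 : (0:ℝ) < (x n : ℝ) := by linarith
      have key : ((x n:ℝ))⁻¹ * ((x n:ℝ))⁻¹ ≤ 2*((x n:ℝ))⁻¹ - 2*(((x n:ℝ))+1)⁻¹ := by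
        have h1 : ((x n:ℝ))⁻¹ * ((x n:ℝ))⁻¹ = 1/((x n:ℝ)*(x n:ℝ)) := by
          rw [one_div, mul_inv]
        have h2 : 2*((x n:ℝ))⁻¹ - 2*(((x n:ℝ))+1)⁻¹ = 2/((x n:ℝ)*((x n:ℝ)+1)) := by
          field_simp
          ring
        rw [h1, h2, div_le_div_iff₀ (by positivity) (by positivity)]
        nlinarith
      push_cast
      nlinarith [ih, key]

set_option maxHeartbeats 2000000 in
lemma det (x : ℕ → ℕ) (q : ℕ → ℝ) (c ε : ℝ) (hc : 0 < c) (hε : 0 < ε)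
    (hx0 : x 0 = 1)
    (hstep : ∀ k, x (k+1) = x k ∨ x (k+1) = x k + 1)
    (hq0 : ∀ k, 0 ≤ q k)
    (hdrift : ∀ k, (x k : ℝ)/((k:ℝ)+1) < c → (1+ε) * ((x k:ℝ)/((k:ℝ)+1)) ≤ q k)
    (l : ℝ)
    (hN0 : Tendsto (fun n => ∑ k ∈ Finset.range n,
        ((if x (k+1) = x k + 1 then (1:ℝ) else 0) - q k) * ((x k : ℝ))⁻¹) atTop (𝓝 l)) :
    c ≤ liminf (fun n => (x n : ℝ)/((n:ℝ)+1)) atTop := by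
  classical
  obtain ⟨ξ, hξdef, hgoal⟩ : ∃ ξ : ℕ → ℝ, (∀ n, ξ n = (x n:ℝ)/((n:ℝ)+1)) ∧
      liminf ξ atTop = liminf (fun n => (x n : ℝ)/((n:ℝ)+1)) atTop := ⟨_, fun _ => rfl, rfl⟩
  rw [← hgoal]
  obtain ⟨N, hNdef, hN⟩ : ∃ N : ℕ → ℝ, (∀ n, N n = ∑ k ∈ Finset.range n,
      ((if x (k+1) = x k + 1 then (1:ℝ) else 0) - q k) * ((x k : ℝ))⁻¹) ∧
      Tendsto N atTop (𝓝 l) := ⟨_, fun _ => rfl, hN0⟩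
  have hmono : Monotone x := monotone_nat_of_le_succ (fun k => by rcases hstep k with h|h <;> omega)
  have hx1 : ∀ k, 1 ≤ x k := fun k => by have := hmono (Nat.zero_le k); omega
  have hxle : ∀ k, x k ≤ k + 1 := by
    intro k; induction k with
    | zero => omega
    | succ k ih => rcases hstep k with h|h <;> omega
  have hxposR : ∀ k, (0:ℝ) < (x k : ℝ) := fun k => by exact_mod_cast hx1 k
  have hξpos : ∀ n, 0 < ξ n := fun n => by
    have := hxposR n; rw [hξdef]; positivity
  have hξle1 : ∀ n, ξ n ≤ 1 := fun n => by
    have hx : (x n:ℝ) ≤ (n:ℝ)+1 := by exact_mod_cast hxle n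
    rw [hξdef]; rw [div_le_one (by positivity)]; exact hx
  have hcob : IsCoboundedUnder (· ≥ ·) atTop ξ := isCoboundedUnder_ge_of_le _ hξle1
  by_contra hcon
  push_neg at hcon
  have h0 : (0:ℝ) ≤ liminf ξ atTop :=
    le_liminf_of_le hcob (Eventually.of_forall (fun n => (hξpos n).le))
  obtain ⟨c', hc'1, hc'2⟩ := exists_between hcon
  obtain ⟨b, hb1, hb2⟩ := exists_between hc'1
  have hbpos : 0 < b := lt_of_le_of_lt h0 hb1
  have hc'pos : 0 < c' := lt_trans hbpos hb2
  have hfreqb : ∃ᶠ n in atTop, ξ n < b := frequently_lt_of_liminf_lt hcob hb1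
  -- difference bound from the key lemma
  have keybound : ∀ s t : ℕ, s ≤ t → (∀ k, s ≤ k → k < t → ξ k < c) →
      N t - N s ≤ 2*((x s:ℝ))⁻¹ + (Real.log (x t) - Real.log (x s))
          - (1+ε)*(Real.log ((t:ℝ)+1) - Real.log ((s:ℝ)+1)) := by
    intro s t hst hbel
    have hbel' : ∀ k, s ≤ k → k < t → (x k : ℝ)/((k:ℝ)+1) < c := by
      intro k h1 h2; rw [← hξdef]; exact hbel k h1 h2
    have hsub : N t - N s = ∑ k ∈ Finset.Ico s t,
        ((if x (k+1) = x k + 1 then (1:ℝ) else 0) - q k) * ((x k : ℝ))⁻¹ := by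
      rw [hNdef, hNdef]
      exact (Finset.sum_Ico_eq_sub _ hst).symm
    rw [hsub]
    exact key x q c ε hε hx1 hstep hq0 hdrift s t hst hbel'
  have htop : Tendsto (fun n:ℕ => Real.log ((n:ℝ)+1)) atTop atTop :=
    Real.tendsto_log_atTop.comp
      (tendsto_atTop_add_const_right _ 1 tendsto_natCast_atTop_atTop)
  -- frequently above c'
  have hfreqc' : ∃ᶠ n in atTop, c' ≤ ξ n := by
    by_contra hev
    rw [not_frequently] at hev
    obtain ⟨NN, hNN⟩ := eventually_atTop.mp hev
    have hNN' : ∀ k, NN ≤ k → ξ k < c' := fun k hk => lt_of_not_ge (hNN k hk)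
    obtain ⟨C0, hC0⟩ : ∃ C0 : ℝ, C0 = N NN + 2*((x NN:ℝ))⁻¹ - Real.log (x NN) + Real.log c'
        + (1+ε)*Real.log ((NN:ℝ)+1) := ⟨_, rfl⟩
    have hbound : ∀ n, NN ≤ n → N n ≤ C0 - ε * Real.log ((n:ℝ)+1) := by
      intro n hn
      have h1 := keybound NN n hn (fun k hk _ => lt_trans (hNN' k hk) hc'2)
      have hlog : Real.log (x n) ≤ Real.log c' + Real.log ((n:ℝ)+1) := by
        have hxn : (x n : ℝ) < c' * ((n:ℝ)+1) := by
          have := hNN' n hn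
          rw [hξdef] at this
          exact (div_lt_iff₀ (by positivity)).mp this
        calc Real.log (x n) ≤ Real.log (c' * ((n:ℝ)+1)) :=
              Real.log_le_log (hxposR n) hxn.le
          _ = Real.log c' + Real.log ((n:ℝ)+1) :=
              Real.log_mul (ne_of_gt hc'pos) (by positivity)
      have hlogNN : Real.log ((NN:ℝ)+1) ≤ Real.log ((n:ℝ)+1) := by
        apply Real.log_le_log (by positivity)
        have : (NN:ℝ) ≤ (n:ℝ) := by exact_mod_cast hn
        linarith
      rw [hC0]; nlinarith [h1, hlog, hlogNN]
    have hev1 : ∀ᶠ n in atTop, l - 1 < N n :=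
      hN.eventually (eventually_gt_nhds (by linarith))
    have hev2 : ∀ᶠ (n:ℕ) in atTop, (C0 - (l-1))/ε + 1 ≤ Real.log ((n:ℝ)+1) :=
      htop.eventually_ge_atTop _
    obtain ⟨n, ⟨hn1, hn2⟩, hn3⟩ := ((hev1.and hev2).and (eventually_ge_atTop NN)).exists
    have := hbound n hn3
    have hεlog : C0 - (l-1) + ε ≤ ε * Real.log ((n:ℝ)+1) := by
      have h5 := mul_le_mul_of_nonneg_left hn2 hε.le
      calc C0 - (l-1) + ε = ε * ((C0 - (l-1))/ε + 1) := by field_simp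
        _ ≤ ε * Real.log ((n:ℝ)+1) := h5
    linarith
  -- excursion construction
  obtain ⟨δ, hδdef⟩ : ∃ δ : ℝ, δ = (Real.log c' - Real.log b)/3 := ⟨_, rfl⟩
  have hδ : 0 < δ := by
    have := Real.log_lt_log hbpos hb2
    rw [hδdef]; linarith
  obtain ⟨S₁, hS₁⟩ := Metric.cauchySeq_iff.mp hN.cauchySeq δ hδ
  obtain ⟨K1, hK1⟩ := exists_nat_gt ((3/c' + 1)/δ)
  obtain ⟨K2, hK2⟩ := exists_nat_gt (b/(c'-b))
  obtain ⟨S, hSdef⟩ : ∃ S : ℕ, S = max S₁ (max K1 K2) := ⟨_, rfl⟩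
  obtain ⟨σ', hσ'S, hσ'⟩ := frequently_atTop.mp hfreqc' S
  obtain ⟨τ₀, hτ₀ge, hτ₀⟩ := frequently_atTop.mp hfreqb (σ'+1)
  have hPex : ∃ t, σ' < t ∧ ξ t < b := ⟨τ₀, by omega, hτ₀⟩
  obtain ⟨τ, hτ1, hτ2, hσT⟩ : ∃ τ, σ' < τ ∧ ξ τ < b ∧ σ' ≤ τ - 1 := by
    obtain ⟨h1, h2⟩ := Nat.find_spec hPex
    exact ⟨Nat.find hPex, h1, h2, by omega⟩
  obtain ⟨σ, hPσ, hσ'σ, hσletm1, hgr⟩ : ∃ σ, c' ≤ ξ σ ∧ σ' ≤ σ ∧ σ ≤ τ - 1 ∧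
      ∀ k, σ < k → k ≤ τ - 1 → ¬ (c' ≤ ξ k) := by
    refine ⟨Nat.findGreatest (fun k => c' ≤ ξ k) (τ - 1), ?_, ?_, ?_, ?_⟩
    · exact Nat.findGreatest_spec (P := fun k => c' ≤ ξ k) hσT hσ'
    · exact Nat.le_findGreatest (P := fun k => c' ≤ ξ k) hσT hσ'
    · exact Nat.findGreatest_le (P := fun k => c' ≤ ξ k) _
    · intro k h1 h2
      exact Nat.findGreatest_is_greatest (P := fun k => c' ≤ ξ k) h1 h2
  have hστ : σ < τ := by omega
  have hintc' : ∀ k, σ < k → k < τ → ξ k < c' := by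
    intro k h1 h2
    exact lt_of_not_ge (hgr k h1 (by omega))
  have hσS : S ≤ σ := le_trans hσ'S hσ'σ
  have hσS₁ : S₁ ≤ σ := le_trans (by rw [hSdef]; exact le_max_left _ _) hσS
  have hσK1 : K1 ≤ σ := le_trans (by rw [hSdef]; exact le_trans (le_max_left _ _) (le_max_right _ _)) hσS
  have hσK2 : K2 ≤ σ := le_trans (by rw [hSdef]; exact le_trans (le_max_right _ _) (le_max_right _ _)) hσS
  have hxσ : c' * ((σ:ℝ)+1) ≤ (x σ : ℝ) := by
    have h := hPσ
    rw [hξdef] at h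
    exact (le_div_iff₀ (by positivity)).mp h
  have hK2' : b * ((σ:ℝ)+2) < c' * ((σ:ℝ)+1) := by
    have hσR : (K2:ℝ) ≤ (σ:ℝ) := by exact_mod_cast hσK2
    have h1 : b/(c'-b) < (σ:ℝ)+1 := by linarith
    have h2 : b < ((σ:ℝ)+1) * (c'-b) := (div_lt_iff₀ (show (0:ℝ) < c'-b by linarith)).mp h1
    nlinarith
  have hτσ2 : σ + 2 ≤ τ := by
    by_contra hle
    have hτeq : τ = σ + 1 := by omega
    have hξσ1 : ξ (σ+1) < b := by rw [← hτeq]; exact hτ2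
    have hxmono : (x σ : ℝ) ≤ (x (σ+1) : ℝ) := by
      exact_mod_cast hmono (Nat.le_succ σ)
    have hlb : c' * ((σ:ℝ)+1) / ((σ:ℝ)+2) ≤ ξ (σ+1) := by
      rw [hξdef]
      have hd : (((σ+1:ℕ)):ℝ)+1 = (σ:ℝ)+2 := by push_cast; ring
      rw [hd]
      have hnum : c' * ((σ:ℝ)+1) ≤ (x (σ+1):ℝ) := by linarith
      exact (div_le_div_iff_of_pos_right (by positivity)).mpr hnum
    have hb' : b < c' * ((σ:ℝ)+1) / ((σ:ℝ)+2) := by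
      rw [lt_div_iff₀ (by positivity)]; linarith [hK2']
    linarith
  -- the three basic bounds
  have hterm : N (σ+1) - N σ ≤ ((x σ:ℝ))⁻¹ := by
    have hS : N (σ+1) = N σ + ((if x (σ+1) = x σ + 1 then (1:ℝ) else 0) - q σ) * ((x σ : ℝ))⁻¹ := by
      rw [hNdef, hNdef]; exact Finset.sum_range_succ _ _
    rw [hS]
    have h1 : ((if x (σ+1) = x σ + 1 then (1:ℝ) else 0) - q σ) ≤ 1 := by
      have := hq0 σ; split <;> linarith
    have h2 : (0:ℝ) ≤ ((x σ : ℝ))⁻¹ := by positivity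
    have h3 := mul_le_mul_of_nonneg_right h1 h2
    rw [one_mul] at h3
    linarith
  have hrest := keybound (σ+1) τ (by omega)
    (fun k hk1 hk2 => lt_trans (hintc' k (by omega) hk2) hc'2)
  -- assemble
  have hinv1 : ((x (σ+1):ℝ))⁻¹ ≤ ((x σ:ℝ))⁻¹ := by
    apply inv_anti₀ (hxposR σ)
    exact_mod_cast hmono (Nat.le_succ σ)
  have hlogτ : Real.log (x τ) ≤ Real.log b + Real.log ((τ:ℝ)+1) := by
    have hxτ : (x τ : ℝ) < b * ((τ:ℝ)+1) := by
      have h := hτ2; rw [hξdef] at h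
      exact (div_lt_iff₀ (by positivity)).mp h
    calc Real.log (x τ) ≤ Real.log (b * ((τ:ℝ)+1)) := Real.log_le_log (hxposR τ) hxτ.le
      _ = Real.log b + Real.log ((τ:ℝ)+1) := Real.log_mul (ne_of_gt hbpos) (by positivity)
  have hlogσ1 : Real.log c' + Real.log ((σ:ℝ)+1) ≤ Real.log (x (σ+1)) := by
    have hmon : (x σ : ℝ) ≤ (x (σ+1):ℝ) := by exact_mod_cast hmono (Nat.le_succ σ)
    calc Real.log c' + Real.log ((σ:ℝ)+1)
        = Real.log (c' * ((σ:ℝ)+1)) := (Real.log_mul (ne_of_gt hc'pos) (by positivity)).symm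
      _ ≤ Real.log (x (σ+1)) := Real.log_le_log (by positivity) (by linarith)
  have hεlog : Real.log (((σ:ℝ)+1)+1) ≤ Real.log ((τ:ℝ)+1) := by
    apply Real.log_le_log (by positivity)
    have : ((σ:ℝ)+2) ≤ ((τ:ℝ)) := by exact_mod_cast hτσ2
    linarith
  have hlogstep : Real.log (((σ:ℝ)+1)+1) - Real.log ((σ:ℝ)+1) ≤ ((σ:ℝ)+1)⁻¹ :=
    log_diff_le ((σ:ℝ)+1) (by positivity)
  have hinvσ : ((x σ:ℝ))⁻¹ ≤ (c' * ((σ:ℝ)+1))⁻¹ := by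
    apply inv_anti₀ (by positivity) hxσ
  have herr : 3 * (c' * ((σ:ℝ)+1))⁻¹ + ((σ:ℝ)+1)⁻¹ < δ := by
    have hσR : (K1:ℝ) ≤ (σ:ℝ) := by exact_mod_cast hσK1
    have h1 : (3/c' + 1)/δ < (σ:ℝ)+1 := by linarith
    have h2 : 3/c' + 1 < δ * ((σ:ℝ)+1) := by
      have h6 := (div_lt_iff₀ hδ).mp h1
      linarith [h6]
    have h3 : (0:ℝ) < (σ:ℝ)+1 := by positivity
    have heq : 3 * (c' * ((σ:ℝ)+1))⁻¹ + ((σ:ℝ)+1)⁻¹ = (3/c' + 1)/((σ:ℝ)+1) := by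
      field_simp
    rw [heq]
    rw [div_lt_iff₀ h3]
    nlinarith
  -- final contradiction
  have hchain : N τ - N σ < -2*δ := by
    have hcast : (((σ+1:ℕ)):ℝ)+1 = ((σ:ℝ)+1)+1 := by push_cast; ring
    have expand : N τ - N σ = (N (σ+1) - N σ) + (N τ - N (σ+1)) := by ring
    rw [expand]
    rw [hcast] at hrest
    have hδ3 : Real.log b - Real.log c' = -3*δ := by rw [hδdef]; ring
    have hmul : 0 ≤ ε * (Real.log ((τ:ℝ)+1) - Real.log (((σ:ℝ)+1)+1)) :=
      mul_nonneg hε.le (by linarith)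
    nlinarith [hterm, hrest, hinv1, hlogτ, hlogσ1, hlogstep, hinvσ, herr, hmul]
  have hdist := hS₁ τ (by omega) σ (by omega)
  rw [Real.dist_eq, abs_lt] at hdist
  linarith [hdist.1, hchain, hδ]

set_option maxHeartbeats 1000000 in
lemma conv {Ω : Type*} [m0 : MeasurableSpace Ω] (ℙ : Measure Ω) [IsProbabilityMeasure ℙ]
    (𝓕 : Filtration ℕ m0) (X : ℕ → Ω → ℕ) (hadapted : ∀ n, Measurable[𝓕 n] (X n))
    (hX0 : ∀ᵐ ω ∂ℙ, X 0 ω = 1)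
    (hstep : ∀ n, ∀ᵐ ω ∂ℙ, X (n+1) ω = X n ω ∨ X (n+1) ω = X n ω + 1) :
    ∀ᵐ ω ∂ℙ, ∃ l : ℝ, Tendsto (fun n => ∑ k ∈ Finset.range n,
      ((Set.indicator {ω' | X (k+1) ω' = X k ω' + 1} (fun _ => (1:ℝ)) ω)
        - (ℙ[Set.indicator {ω' | X (k+1) ω' = X k ω' + 1} (fun _ => (1:ℝ)) | 𝓕 k]) ω)
        * ((X k ω : ℝ))⁻¹) atTop (𝓝 l) := by
  classical
  set I : ℕ → Ω → ℝ := fun k => Set.indicator {ω' | X (k+1) ω' = X k ω' + 1} (fun _ => (1:ℝ))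
    with hI
  set p : ℕ → Ω → ℝ := fun k => ℙ[I k | 𝓕 k] with hp
  set d : ℕ → Ω → ℝ := fun k ω => (I k ω - p k ω) * ((X k ω : ℝ))⁻¹ with hd
  set f : ℕ → Ω → ℝ := fun n ω => ∑ k ∈ Finset.range n, d k ω with hf
  have hle : ∀ k : ℕ, 𝓕 k ≤ 𝓕 (k+1) := fun k => 𝓕.mono (Nat.le_succ k)
  have hAmeas : ∀ k, MeasurableSet[𝓕 (k+1)] {ω' | X (k+1) ω' = X k ω' + 1} := fun k =>
    measurableSet_eq_fun (hadapted (k+1))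
      (((hadapted k).mono (hle k) le_rfl).add measurable_const)
  have hAm0 : ∀ k, MeasurableSet {ω' | X (k+1) ω' = X k ω' + 1} := fun k =>
    (𝓕.le (k+1)) _ (hAmeas k)
  have hIsm : ∀ k, StronglyMeasurable[𝓕 (k+1)] (I k) := fun k =>
    stronglyMeasurable_const.indicator (hAmeas k)
  have hIint : ∀ k, Integrable (I k) ℙ := fun k => (integrable_const 1).indicator (hAm0 k)
  have hI01 : ∀ k ω, I k ω = 0 ∨ I k ω = 1 := fun k ω => by
    by_cases h : ω ∈ {ω' | X (k+1) ω' = X k ω' + 1}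
    · right; simp [hI, Set.indicator_of_mem h]
    · left; simp [hI, Set.indicator_of_notMem h]
  have hpsm : ∀ k, StronglyMeasurable[𝓕 k] (p k) := fun k => stronglyMeasurable_condExp
  have hpint : ∀ k, Integrable (p k) ℙ := fun k => integrable_condExp
  have hp0 : ∀ k, 0 ≤ᵐ[ℙ] p k := fun k =>
    condExp_nonneg (Eventually.of_forall fun ω => by rcases hI01 k ω with h|h <;> simp [h])
  have hp1 : ∀ k, p k ≤ᵐ[ℙ] fun _ => (1:ℝ) := fun k => by
    have h1 : p k ≤ᵐ[ℙ] ℙ[(fun _ => (1:ℝ)) | 𝓕 k] :=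
      condExp_mono (hIint k) (integrable_const 1)
        (Eventually.of_forall fun ω => by rcases hI01 k ω with h|h <;> simp [h])
    have h2 : ℙ[(fun _ => (1:ℝ)) | 𝓕 k] = fun _ => (1:ℝ) := condExp_const (𝓕.le k) 1
    rw [h2] at h1; exact h1
  have hXinvsm : ∀ k, StronglyMeasurable[𝓕 k] (fun ω => ((X k ω : ℝ))⁻¹) := fun k =>
    Measurable.stronglyMeasurable
      ((measurable_from_top (f := fun n : ℕ => ((n:ℝ))⁻¹)).comp (hadapted k))
  have hXinv0 : ∀ k (ω : Ω), 0 ≤ ((X k ω : ℝ))⁻¹ := fun k ω => by positivity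
  have hXinv1 : ∀ k (ω : Ω), ((X k ω : ℝ))⁻¹ ≤ 1 := fun k ω => by
    rcases Nat.eq_zero_or_pos (X k ω) with h | h
    · simp [h]
    · have : (1:ℝ) ≤ (X k ω : ℝ) := by exact_mod_cast h
      exact inv_le_one_of_one_le₀ this
  have hdsm : ∀ k, StronglyMeasurable[𝓕 (k+1)] (d k) := fun k =>
    ((hIsm k).sub ((hpsm k).mono (hle k))).mul ((hXinvsm k).mono (hle k))
  have hdm0 : ∀ k, AEStronglyMeasurable (d k) ℙ := fun k =>
    ((hdsm k).mono (𝓕.le (k+1))).aestronglyMeasurable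
  have hdbd : ∀ k, ∀ᵐ ω ∂ℙ, ‖d k ω‖ ≤ 1 := by
    intro k
    filter_upwards [hp0 k, hp1 k] with ω h0 h1
    simp only [Pi.zero_apply] at h0
    have h1' : p k ω ≤ 1 := h1
    have habs : |I k ω - p k ω| ≤ 1 := by
      rcases hI01 k ω with h|h <;> rw [h] <;> rw [abs_le] <;> constructor <;> linarith
    rw [hd]
    rw [Real.norm_eq_abs, abs_mul]
    have h2 : |((X k ω : ℝ))⁻¹| ≤ 1 := by
      rw [abs_of_nonneg (hXinv0 k ω)]; exact hXinv1 k ω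
    calc |I k ω - p k ω| * |((X k ω : ℝ))⁻¹| ≤ 1 * 1 :=
          mul_le_mul habs h2 (abs_nonneg _) zero_le_one
      _ = 1 := by norm_num
  have hdint : ∀ k, Integrable (d k) ℙ := fun k =>
    Integrable.mono' (integrable_const 1) (hdm0 k) (hdbd k)
  have hfadd : ∀ n, f (n+1) = f n + d n := fun n => funext fun ω => by
    simp [hf, Finset.sum_range_succ]
  have hfsm : ∀ n, StronglyMeasurable[𝓕 n] (f n) := fun n =>
    Finset.stronglyMeasurable_fun_sum _ (fun k hk =>
      (hdsm k).mono (𝓕.mono (Nat.succ_le_of_lt (Finset.mem_range.mp hk))))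
  have hfint : ∀ n, Integrable (f n) ℙ := fun n => integrable_finset_sum _ (fun k _ => hdint k)
  -- conditional expectation of increments vanishes
  have hcd0 : ∀ n, ℙ[d n | 𝓕 n] =ᵐ[ℙ] 0 := by
    intro n
    have h1 : d n = (fun ω => ((X n ω : ℝ))⁻¹) * (I n - p n) := funext fun ω => by
      simp [hd]; ring
    have hint2 : Integrable ((fun ω => ((X n ω : ℝ))⁻¹) * (I n - p n)) ℙ := h1 ▸ hdint n
    have h2 := condExp_mul_of_stronglyMeasurable_left (hXinvsm n) hint2 ((hIint n).sub (hpint n))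
    have h3 : ℙ[I n - p n | 𝓕 n] =ᵐ[ℙ] 0 := by
      have h4 := condExp_sub (μ := ℙ) (m := 𝓕 n) (hIint n) (hpint n)
      have h5 : ℙ[p n | 𝓕 n] = p n :=
        condExp_of_stronglyMeasurable (𝓕.le n) (hpsm n) (hpint n)
      calc ℙ[I n - p n | 𝓕 n] =ᵐ[ℙ] ℙ[I n | 𝓕 n] - ℙ[p n | 𝓕 n] := h4
        _ = p n - p n := by rw [h5, hp]
        _ = 0 := by simp
    rw [h1]
    calc ℙ[(fun ω => ((X n ω : ℝ))⁻¹) * (I n - p n) | 𝓕 n]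
        =ᵐ[ℙ] (fun ω => ((X n ω : ℝ))⁻¹) * ℙ[I n - p n | 𝓕 n] := h2
      _ =ᵐ[ℙ] (fun ω => ((X n ω : ℝ))⁻¹) * 0 := by
          filter_upwards [h3] with ω hω
          simp only [Pi.mul_apply, Pi.zero_apply, hω]
      _ = 0 := by simp
  have hmart : Martingale f 𝓕 ℙ := by
    apply martingale_nat (fun n => hfsm n) hfint
    intro n
    have h1 : ℙ[f (n+1) | 𝓕 n] =ᵐ[ℙ] f n := by
      rw [hfadd n]
      calc ℙ[f n + d n | 𝓕 n] =ᵐ[ℙ] ℙ[f n | 𝓕 n] + ℙ[d n | 𝓕 n] :=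
            condExp_add (hfint n) (hdint n) _
        _ =ᵐ[ℙ] f n + 0 := by
            have h5 : ℙ[f n | 𝓕 n] = f n :=
              condExp_of_stronglyMeasurable (𝓕.le n) (hfsm n) (hfint n)
            rw [h5]
            filter_upwards [hcd0 n] with ω hω
            simp [hω]
        _ = f n := by simp
    exact h1.symm
  -- basic a.e.-measurability for products
  have hIaesm : ∀ k, AEStronglyMeasurable (I k) ℙ := fun k =>
    ((hIsm k).mono (𝓕.le (k+1))).aestronglyMeasurable
  have hpaesm : ∀ k, AEStronglyMeasurable (p k) ℙ := fun k =>
    ((hpsm k).mono (𝓕.le k)).aestronglyMeasurable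
  have hvaesm : ∀ k, AEStronglyMeasurable (fun ω => ((X k ω : ℝ))⁻¹) ℙ := fun k =>
    ((hXinvsm k).mono (𝓕.le k)).aestronglyMeasurable
  have hfaesm : ∀ n, AEStronglyMeasurable (f n) ℙ := fun n =>
    ((hfsm n).mono (𝓕.le n)).aestronglyMeasurable
  have hI0 : ∀ k (ω : Ω), 0 ≤ I k ω := fun k ω => by rcases hI01 k ω with h|h <;> rw [h] <;> norm_num
  have hIle1 : ∀ k (ω : Ω), I k ω ≤ 1 := fun k ω => by
    rcases hI01 k ω with h|h <;> rw [h] <;> norm_num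
  set g : ℕ → Ω → ℝ := fun k ω => I k ω * (((X k ω:ℝ))⁻¹ * ((X k ω:ℝ))⁻¹) with hg
  have hgaesm : ∀ k, AEStronglyMeasurable (g k) ℙ := fun k =>
    (hIaesm k).mul ((hvaesm k).mul (hvaesm k))
  have hgbd : ∀ k (ω : Ω), ‖g k ω‖ ≤ 1 := fun k ω => by
    rw [hg, Real.norm_eq_abs]
    have h1 := hI0 k ω; have h2 := hIle1 k ω
    have h3 := hXinv0 k ω; have h4 := hXinv1 k ω
    rw [abs_of_nonneg (by positivity)]
    nlinarith
  have hgint : ∀ k, Integrable (g k) ℙ := fun k =>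
    Integrable.mono' (integrable_const 1) (hgaesm k) (Eventually.of_forall (hgbd k))
  have hg0 : ∀ k (ω : Ω), 0 ≤ g k ω := fun k ω => by
    rw [hg]; have := hI0 k ω; positivity
  have hfbd : ∀ n, ∀ᵐ ω ∂ℙ, ‖f n ω‖ ≤ n := by
    intro n
    filter_upwards [ae_all_iff.mpr hdbd] with ω h
    rw [hf]
    calc ‖∑ k ∈ Finset.range n, d k ω‖ ≤ ∑ k ∈ Finset.range n, ‖d k ω‖ := norm_sum_le _ _
      _ ≤ ∑ _k ∈ Finset.range n, (1:ℝ) := Finset.sum_le_sum (fun k _ => h k)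
      _ = n := by simp
  have hffint : ∀ n, Integrable (fun ω => f n ω * f n ω) ℙ := by
    intro n
    apply Integrable.mono' (integrable_const ((n:ℝ)*n)) ((hfaesm n).mul (hfaesm n))
    filter_upwards [hfbd n] with ω h
    show ‖f n ω * f n ω‖ ≤ (n:ℝ)*n
    rw [Real.norm_eq_abs, abs_mul]
    have : (0:ℝ) ≤ n := by positivity
    rw [Real.norm_eq_abs] at h
    nlinarith [abs_nonneg (f n ω)]
  have hfdint : ∀ n, Integrable (fun ω => f n ω * d n ω) ℙ := by
    intro n
    apply Integrable.mono' (integrable_const ((n:ℝ))) ((hfaesm n).mul (hdm0 n))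
    filter_upwards [hfbd n, hdbd n] with ω h1 h2
    show ‖f n ω * d n ω‖ ≤ (n:ℝ)
    rw [Real.norm_eq_abs, abs_mul]
    rw [Real.norm_eq_abs] at h1; rw [Real.norm_eq_abs] at h2
    nlinarith [abs_nonneg (f n ω), abs_nonneg (d n ω)]
  have hd2int : ∀ n, Integrable (fun ω => d n ω * d n ω) ℙ := by
    intro n
    apply Integrable.mono' (integrable_const (1:ℝ)) ((hdm0 n).mul (hdm0 n))
    filter_upwards [hdbd n] with ω h
    show ‖d n ω * d n ω‖ ≤ (1:ℝ)
    rw [Real.norm_eq_abs, abs_mul]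
    rw [Real.norm_eq_abs] at h
    nlinarith [abs_nonneg (d n ω)]
  -- ∫ f_n d_n = 0
  have hfd0 : ∀ n, ∫ ω, f n ω * d n ω ∂ℙ = 0 := by
    intro n
    have hint : Integrable (f n * d n) ℙ := hfdint n
    have h2 := condExp_mul_of_stronglyMeasurable_left (hfsm n) hint (hdint n)
    have h3 : ℙ[f n * d n | 𝓕 n] =ᵐ[ℙ] 0 := by
      refine h2.trans ?_
      filter_upwards [hcd0 n] with ω hω
      have : (ℙ[d n | 𝓕 n]) ω = 0 := hω
      simp [Pi.mul_apply, this]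
    calc ∫ ω, f n ω * d n ω ∂ℙ = ∫ ω, (f n * d n) ω ∂ℙ := rfl
      _ = ∫ ω, (ℙ[f n * d n | 𝓕 n]) ω ∂ℙ := (integral_condExp (𝓕.le n)).symm
      _ = ∫ ω, (0:Ω → ℝ) ω ∂ℙ := integral_congr_ae h3
      _ = 0 := by simp
  -- ∫ p_n v_n² = ∫ g_n
  have hpg : ∀ n, ∫ ω, p n ω * (((X n ω:ℝ))⁻¹ * ((X n ω:ℝ))⁻¹) ∂ℙ = ∫ ω, g n ω ∂ℙ := by
    intro n
    have hvsm : StronglyMeasurable[𝓕 n] (fun ω => ((X n ω:ℝ))⁻¹ * ((X n ω:ℝ))⁻¹) :=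
      (hXinvsm n).mul (hXinvsm n)
    have hint : Integrable ((fun ω => ((X n ω:ℝ))⁻¹ * ((X n ω:ℝ))⁻¹) * I n) ℙ := by
      apply Integrable.mono' (integrable_const (1:ℝ))
        (((hvaesm n).mul (hvaesm n)).mul (hIaesm n))
      refine Eventually.of_forall (fun ω => ?_)
      have h1 := hI0 n ω; have h2 := hIle1 n ω
      have h3 := hXinv0 n ω; have h4 := hXinv1 n ω
      show ‖((fun ω => ((X n ω:ℝ))⁻¹ * ((X n ω:ℝ))⁻¹) * I n) ω‖ ≤ (1:ℝ)
      simp only [Pi.mul_apply]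
      rw [Real.norm_eq_abs, abs_of_nonneg (by positivity)]
      nlinarith
    have h2 := condExp_mul_of_stronglyMeasurable_left hvsm hint (hIint n)
    have hpn : ℙ[I n | 𝓕 n] = p n := (congrFun hp n).symm
    calc ∫ ω, p n ω * (((X n ω:ℝ))⁻¹ * ((X n ω:ℝ))⁻¹) ∂ℙ
        = ∫ ω, ((fun ω => ((X n ω:ℝ))⁻¹ * ((X n ω:ℝ))⁻¹) * ℙ[I n | 𝓕 n]) ω ∂ℙ := by
          rw [hpn]
          exact integral_congr_ae (Eventually.of_forall (fun ω => by
            simp only [Pi.mul_apply]; ring))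
      _ = ∫ ω, (ℙ[(fun ω => ((X n ω:ℝ))⁻¹ * ((X n ω:ℝ))⁻¹) * I n | 𝓕 n]) ω ∂ℙ :=
          (integral_congr_ae h2).symm
      _ = ∫ ω, ((fun ω => ((X n ω:ℝ))⁻¹ * ((X n ω:ℝ))⁻¹) * I n) ω ∂ℙ :=
          integral_condExp (𝓕.le n)
      _ = ∫ ω, g n ω ∂ℙ := by
          exact integral_congr_ae (Eventually.of_forall (fun ω => by
            simp only [Pi.mul_apply, hg]; ring))
  -- ∫ d_n² ≤ 2 ∫ g_n
  have hd2le : ∀ n, ∫ ω, d n ω * d n ω ∂ℙ ≤ 2 * ∫ ω, g n ω ∂ℙ := by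
    intro n
    have hpvint : Integrable (fun ω => p n ω * (((X n ω:ℝ))⁻¹ * ((X n ω:ℝ))⁻¹)) ℙ := by
      apply Integrable.mono' (integrable_const (1:ℝ))
        ((hpaesm n).mul ((hvaesm n).mul (hvaesm n)))
      filter_upwards [hp0 n, hp1 n] with ω h0 h1
      simp only [Pi.zero_apply] at h0
      have h1' : p n ω ≤ 1 := h1
      have h3 := hXinv0 n ω; have h4 := hXinv1 n ω
      show ‖p n ω * (((X n ω:ℝ))⁻¹ * ((X n ω:ℝ))⁻¹)‖ ≤ (1:ℝ)
      rw [Real.norm_eq_abs, abs_of_nonneg (by positivity)]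
      nlinarith
    have hmono_ae : ∀ᵐ ω ∂ℙ, d n ω * d n ω ≤ g n ω + p n ω * (((X n ω:ℝ))⁻¹ * ((X n ω:ℝ))⁻¹) := by
      filter_upwards [hp0 n, hp1 n] with ω h0 h1
      simp only [Pi.zero_apply] at h0
      have h1' : p n ω ≤ 1 := h1
      have h3 := hXinv0 n ω; have h4 := hXinv1 n ω
      simp only [hd, hg]
      rcases hI01 n ω with h|h <;> rw [h] <;>
        nlinarith [mul_nonneg h3 h3, mul_nonneg h0 (mul_nonneg h3 h3),
          mul_nonneg (mul_nonneg h0 (sub_nonneg.mpr h1')) (mul_nonneg h3 h3)]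
    calc ∫ ω, d n ω * d n ω ∂ℙ
        ≤ ∫ ω, (g n ω + p n ω * (((X n ω:ℝ))⁻¹ * ((X n ω:ℝ))⁻¹)) ∂ℙ :=
          integral_mono_ae (hd2int n) ((hgint n).add hpvint) hmono_ae
      _ = ∫ ω, g n ω ∂ℙ + ∫ ω, p n ω * (((X n ω:ℝ))⁻¹ * ((X n ω:ℝ))⁻¹) ∂ℙ :=
          integral_add (hgint n) hpvint
      _ = 2 * ∫ ω, g n ω ∂ℙ := by rw [hpg n]; ring
  -- second moment bound by induction
  have hsq : ∀ n, ∫ ω, f n ω * f n ω ∂ℙ ≤ 2 * ∑ k ∈ Finset.range n, ∫ ω, g k ω ∂ℙ := by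
    intro n
    induction n with
    | zero => simp [hf]
    | succ n ih =>
      have hexp : (fun ω => f (n+1) ω * f (n+1) ω)
          = (fun ω => f n ω * f n ω) + ((fun ω => 2 * (f n ω * d n ω)) + fun ω => d n ω * d n ω) := by
        funext ω
        rw [hfadd n]
        simp only [Pi.add_apply]
        ring
      have hint2 : Integrable (fun ω => 2 * (f n ω * d n ω)) ℙ := (hfdint n).const_mul 2
      have hstep1 : ∫ ω, f (n+1) ω * f (n+1) ω ∂ℙ
          = ∫ ω, f n ω * f n ω ∂ℙ + (∫ ω, 2 * (f n ω * d n ω) ∂ℙ + ∫ ω, d n ω * d n ω ∂ℙ) := by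
        have e1 : ∫ ω, f (n+1) ω * f (n+1) ω ∂ℙ
            = ∫ ω, (f n ω * f n ω + (2 * (f n ω * d n ω) + d n ω * d n ω)) ∂ℙ :=
          integral_congr_ae (Eventually.of_forall (fun ω => by
            rw [hfadd n]; simp only [Pi.add_apply]; ring))
        have hint23 : Integrable (fun ω => 2 * (f n ω * d n ω) + d n ω * d n ω) ℙ :=
          hint2.add (hd2int n)
        rw [e1, integral_add (hffint n) hint23, integral_add hint2 (hd2int n)]
      have h2 : ∫ ω, 2 * (f n ω * d n ω) ∂ℙ = 0 := by
        rw [integral_const_mul, hfd0 n, mul_zero]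
      rw [hstep1, h2, Finset.sum_range_succ]
      have := hd2le n
      linarith
  -- pathwise bound on the sum of g's
  have hpath : ∀ n, ∀ᵐ ω ∂ℙ, ∑ k ∈ Finset.range n, g k ω ≤ 2 := by
    intro n
    filter_upwards [hX0, ae_all_iff.mpr hstep] with ω h0 hs
    have hIif : ∀ k, I k ω = (if X (k+1) ω = X k ω + 1 then (1:ℝ) else 0) := by
      intro k
      by_cases h : X (k+1) ω = X k ω + 1
      · rw [if_pos h]
        simp [hI, Set.indicator_of_mem (show ω ∈ {ω' | X (k+1) ω' = X k ω' + 1} from h)]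
      · rw [if_neg h]
        simp [hI, Set.indicator_of_notMem (show ω ∉ {ω' | X (k+1) ω' = X k ω' + 1} from h)]
    have hps := path_sq (fun k => X k ω) h0 hs n
    calc ∑ k ∈ Finset.range n, g k ω
        = ∑ k ∈ Finset.range n, (if X (k+1) ω = X k ω + 1 then (1:ℝ) else 0)
            * ((X k ω:ℝ))⁻¹ * ((X k ω:ℝ))⁻¹ :=
          Finset.sum_congr rfl (fun k _ => by simp only [hg, hIif k]; ring)
      _ ≤ 2 - 2*((X n ω:ℝ))⁻¹ := hps
      _ ≤ 2 := by linarith [hXinv0 n ω]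
  have hgsum : ∀ n, ∑ k ∈ Finset.range n, ∫ ω, g k ω ∂ℙ ≤ 2 := by
    intro n
    rw [← integral_finset_sum _ (fun k _ => hgint k)]
    calc ∫ ω, ∑ k ∈ Finset.range n, g k ω ∂ℙ ≤ ∫ (_ : Ω), (2:ℝ) ∂ℙ :=
          integral_mono_ae (integrable_finset_sum _ (fun k _ => hgint k))
            (integrable_const 2) (hpath n)
      _ = 2 := by rw [integral_const]; simp
  have hL2 : ∀ n, ∫ ω, f n ω * f n ω ∂ℙ ≤ 4 := fun n => by
    have h1 := hsq n; have h2 := hgsum n; linarith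
  have hL1 : ∀ n, ∫ ω, ‖f n ω‖ ∂ℙ ≤ 3 := by
    intro n
    have hptw : ∀ ω, ‖f n ω‖ ≤ (f n ω * f n ω + 1)/2 := fun ω => by
      rw [Real.norm_eq_abs]
      nlinarith [sq_nonneg (|f n ω| - 1), sq_abs (f n ω), abs_nonneg (f n ω)]
    calc ∫ ω, ‖f n ω‖ ∂ℙ ≤ ∫ ω, (f n ω * f n ω + 1)/2 ∂ℙ :=
          integral_mono_ae ((hfint n).norm)
            (((hffint n).add (integrable_const 1)).div_const 2)
            (Eventually.of_forall hptw)
      _ = (∫ ω, (f n ω * f n ω + 1) ∂ℙ)/2 := integral_div 2 _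
      _ = (∫ ω, f n ω * f n ω ∂ℙ + 1)/2 := by
          rw [integral_add (hffint n) (integrable_const 1)]
          simp
      _ ≤ (4+1)/2 := by have := hL2 n; linarith
      _ ≤ 3 := by norm_num
  have hbdd : ∀ n, eLpNorm (f n) 1 ℙ ≤ (3 : ℝ≥0) := by
    intro n
    rw [eLpNorm_one_eq_lintegral_enorm, ← ofReal_integral_norm_eq_lintegral_enorm (hfint n)]
    calc ENNReal.ofReal (∫ ω, ‖f n ω‖ ∂ℙ) ≤ ENNReal.ofReal 3 :=
          ENNReal.ofReal_le_ofReal (hL1 n)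
      _ = ((3:ℝ≥0) : ℝ≥0∞) := by norm_num
  have hconv := hmart.submartingale.ae_tendsto_limitProcess hbdd
  filter_upwards [hconv] with ω hω
  refine ⟨𝓕.limitProcess f ℙ ω, ?_⟩
  have hfeq : (fun n => ∑ k ∈ Finset.range n,
      ((Set.indicator {ω' | X (k+1) ω' = X k ω' + 1} (fun _ => (1:ℝ)) ω)
        - (ℙ[Set.indicator {ω' | X (k+1) ω' = X k ω' + 1} (fun _ => (1:ℝ)) | 𝓕 k]) ω)
        * ((X k ω : ℝ))⁻¹) = (fun n => f n ω) := by
    funext n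
    simp only [hf, hd, hp, hI]
  rw [hfeq]
  exact hω

end Statement1Aux

open MeasureTheory Filter

/-- Stochastic domination for urn-like processes: if `(X n)` is an integer-valued adapted
process with `X 0 = 1`, `X (n+1) ∈ {X n, X n + 1}`, and conditional probability of an
increase, given `𝓕 n`, at least `G (X n / (n+1))`, where `G : [0,1] → [0,1]` satisfies
`G x > (1+ε) x` on `(0, c)` for some `c, ε > 0`, then almost surely
`liminf X n / (n+1) ≥ c`. -/
theorem statement1
    {Ω : Type*} [m0 : MeasurableSpace Ω] (ℙ : Measure Ω) [IsProbabilityMeasure ℙ]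
    (𝓕 : Filtration ℕ m0)
    (X : ℕ → Ω → ℕ)
    (hadapted : ∀ n, Measurable[𝓕 n] (X n))
    (hX0 : ∀ᵐ ω ∂ℙ, X 0 ω = 1)
    (hstep : ∀ n, ∀ᵐ ω ∂ℙ, X (n+1) ω = X n ω ∨ X (n+1) ω = X n ω + 1)
    (G : ℝ → ℝ)
    (hG_range : ∀ x ∈ Set.Icc (0:ℝ) 1, G x ∈ Set.Icc (0:ℝ) 1)
    (hcond : ∀ n, ∀ᵐ ω ∂ℙ,
      G ((X n ω : ℝ) / (n+1)) ≤
        (ℙ[Set.indicator {ω' | X (n+1) ω' = X n ω' + 1} (fun _ => (1:ℝ)) | 𝓕 n]) ω)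
    (c ε : ℝ) (hc : 0 < c) (hε : 0 < ε)
    (hdomin : ∀ x ∈ Set.Ioo (0:ℝ) c, (1 + ε) * x < G x) :
    ∀ᵐ ω ∂ℙ, c ≤ liminf (fun n => (X n ω : ℝ) / (n+1)) atTop := by
  classical
  have hconv := Statement1Aux.conv ℙ 𝓕 X hadapted hX0 hstep
  have hp0 : ∀ k : ℕ, ∀ᵐ ω ∂ℙ, 0 ≤
      (ℙ[Set.indicator {ω' | X (k+1) ω' = X k ω' + 1} (fun _ => (1:ℝ)) | 𝓕 k]) ω := by
    intro k
    have h := condExp_nonneg (μ := ℙ) (m := 𝓕 k)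
      (f := Set.indicator {ω' | X (k+1) ω' = X k ω' + 1} (fun _ => (1:ℝ)))
      (Eventually.of_forall fun ω => Set.indicator_nonneg (fun _ _ => zero_le_one) ω)
    filter_upwards [h] with ω hω
    exact hω
  filter_upwards [hconv, hX0, ae_all_iff.mpr hstep, ae_all_iff.mpr hcond,
    ae_all_iff.mpr hp0] with ω hω h0 hs hcondω hp0ω
  obtain ⟨l, hl⟩ := hω
  have hiff : ∀ k : ℕ, Set.indicator {ω' | X (k+1) ω' = X k ω' + 1} (fun _ => (1:ℝ)) ω
      = (if X (k+1) ω = X k ω + 1 then (1:ℝ) else 0) := by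
    intro k
    by_cases h : X (k+1) ω = X k ω + 1
    · rw [if_pos h, Set.indicator_of_mem (show ω ∈ {ω' | X (k+1) ω' = X k ω' + 1} from h)]
    · rw [if_neg h,
        Set.indicator_of_notMem (show ω ∉ {ω' | X (k+1) ω' = X k ω' + 1} from h)]
  have hl' : Tendsto (fun n => ∑ k ∈ Finset.range n,
      ((if X (k+1) ω = X k ω + 1 then (1:ℝ) else 0)
        - (ℙ[Set.indicator {ω' | X (k+1) ω' = X k ω' + 1} (fun _ => (1:ℝ)) | 𝓕 k]) ω)
      * ((X k ω : ℝ))⁻¹) atTop (𝓝 l) := by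
    have heq : (fun n => ∑ k ∈ Finset.range n,
        ((if X (k+1) ω = X k ω + 1 then (1:ℝ) else 0)
          - (ℙ[Set.indicator {ω' | X (k+1) ω' = X k ω' + 1} (fun _ => (1:ℝ)) | 𝓕 k]) ω)
        * ((X k ω : ℝ))⁻¹)
        = (fun n => ∑ k ∈ Finset.range n,
        ((Set.indicator {ω' | X (k+1) ω' = X k ω' + 1} (fun _ => (1:ℝ)) ω)
          - (ℙ[Set.indicator {ω' | X (k+1) ω' = X k ω' + 1} (fun _ => (1:ℝ)) | 𝓕 k]) ω)
        * ((X k ω : ℝ))⁻¹) :=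
      funext fun n => Finset.sum_congr rfl (fun k _ => by rw [hiff k])
    rw [heq]
    exact hl
  have hx1 : ∀ k, 1 ≤ X k ω := by
    intro k
    induction k with
    | zero => omega
    | succ k ih => rcases hs k with h|h <;> omega
  have hdrift : ∀ k : ℕ, (X k ω : ℝ)/((k:ℝ)+1) < c →
      (1+ε) * ((X k ω:ℝ)/((k:ℝ)+1)) ≤
        (ℙ[Set.indicator {ω' | X (k+1) ω' = X k ω' + 1} (fun _ => (1:ℝ)) | 𝓕 k]) ω := by
    intro k hk
    have hpos : 0 < (X k ω : ℝ)/((k:ℝ)+1) := by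
      have h1 : (0:ℝ) < (X k ω : ℝ) := by exact_mod_cast hx1 k
      positivity
    have h1 := hdomin _ ⟨hpos, hk⟩
    have h2 := hcondω k
    linarith
  exact Statement1Aux.det (fun k => X k ω)
    (fun k => (ℙ[Set.indicator {ω' | X (k+1) ω' = X k ω' + 1} (fun _ => (1:ℝ)) | 𝓕 k]) ω)
    c ε hc hε h0 hs hp0ω hdrift l hl'
end

section
/- Fix α ∈ (0,1). For c = (c1,c2,c3) ∈ (0,∞)³ define P1(c) = (α·c1·c2 + c1·c3)/(c1·c2 + c1·c3 + c2·c3), P2(c) = 1 − P1(c), and P3(c) = (α·c2·c3 + (1−α)·c1·c3)/(c1·c2 + c1·c3 + c2·c3). Let δ ∈ [0,1), and let x = (x1,x2,x3), y = (y1,y2,y3) ∈ (0,∞)³ satisfy (1−δ)·y_i ≤ x_i ≤ (1+δ)·y_i for i = 1,2,3. Then for each i ∈ {1,2,3}, ((1−δ)/(1+δ))·P_i(y) ≤ P_i(x) ≤ ((1+δ)/(1−δ))·P_i(y). -/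
/-- `P1 α c1 c2 c3` is the probability that an ant reinforces branch 1 of the triangle,
given effective conductances `c1, c2, c3` of the three branches. -/
noncomputable def P1 (α c1 c2 c3 : ℝ) : ℝ :=
  (α * c1 * c2 + c1 * c3) / (c1 * c2 + c1 * c3 + c2 * c3)

/-- `P2 α c1 c2 c3 = 1 - P1 α c1 c2 c3`, the probability of reinforcing branch 2. -/
noncomputable def P2 (α c1 c2 c3 : ℝ) : ℝ := 1 - P1 α c1 c2 c3

/-- `P3 α c1 c2 c3`, the probability of reinforcing branch 3. -/
noncomputable def P3 (α c1 c2 c3 : ℝ) : ℝ :=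
  (α * c2 * c3 + (1 - α) * c1 * c3) / (c1 * c2 + c1 * c3 + c2 * c3)

/-- Lower cleared bound for a single monomial ratio. -/
lemma mono_low (δ a b c d e f : ℝ) (hδ0 : 0 ≤ δ)
    (ha : 0 < a) (hb : 0 < b) (hc : 0 < c) (hd : 0 < d) (he : 0 < e) (hf : 0 < f)
    (h1 : (1 - δ) * d ≤ a) (h2 : (1 - δ) * e ≤ b) (h3 : c ≤ (1 + δ) * f) :
    (1 - δ) * (d * e) * (a * b + a * c + b * c) ≤
      (1 + δ) * (a * b) * (d * e + d * f + e * f) := by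
  have A : (1 - δ) * e * c ≤ (1 + δ) * b * f := by nlinarith
  have B : (1 - δ) * d * c ≤ (1 + δ) * a * f := by nlinarith
  have hA := mul_le_mul_of_nonneg_left A (by positivity : (0:ℝ) ≤ a * d)
  have hB := mul_le_mul_of_nonneg_left B (by positivity : (0:ℝ) ≤ b * e)
  nlinarith [mul_pos (mul_pos ha hb) (mul_pos hd he)]

/-- Upper cleared bound for a single monomial ratio. -/
lemma mono_up (δ a b c d e f : ℝ) (hδ0 : 0 ≤ δ)
    (ha : 0 < a) (hb : 0 < b) (hc : 0 < c) (hd : 0 < d) (he : 0 < e) (hf : 0 < f)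
    (h1 : a ≤ (1 + δ) * d) (h2 : b ≤ (1 + δ) * e) (h3 : (1 - δ) * f ≤ c) :
    (1 - δ) * (a * b) * (d * e + d * f + e * f) ≤
      (1 + δ) * (d * e) * (a * b + a * c + b * c) := by
  have A : (1 - δ) * b * f ≤ (1 + δ) * e * c := by nlinarith
  have B : (1 - δ) * a * f ≤ (1 + δ) * d * c := by nlinarith
  have hA := mul_le_mul_of_nonneg_left A (by positivity : (0:ℝ) ≤ a * d)
  have hB := mul_le_mul_of_nonneg_left B (by positivity : (0:ℝ) ≤ b * e)
  nlinarith [mul_pos (mul_pos ha hb) (mul_pos hd he)]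

/-- If `x` and `y` are coordinatewise within a factor `1 ± δ` of each other, then the
reinforcement probabilities `P i` at `x` and `y` are within a factor
`(1-δ)/(1+δ) … (1+δ)/(1-δ)` of each other, for `i = 1, 2, 3`. -/

theorem statement4 (α : ℝ) (hα : α ∈ Set.Ioo (0:ℝ) 1) (δ : ℝ) (hδ : δ ∈ Set.Ico (0:ℝ) 1)
    (x1 x2 x3 y1 y2 y3 : ℝ)
    (hx1 : 0 < x1) (hx2 : 0 < x2) (hx3 : 0 < x3)
    (hy1 : 0 < y1) (hy2 : 0 < y2) (hy3 : 0 < y3)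
    (h1l : (1 - δ) * y1 ≤ x1) (h1u : x1 ≤ (1 + δ) * y1)
    (h2l : (1 - δ) * y2 ≤ x2) (h2u : x2 ≤ (1 + δ) * y2)
    (h3l : (1 - δ) * y3 ≤ x3) (h3u : x3 ≤ (1 + δ) * y3) :
    ((1 - δ) / (1 + δ) * P1 α y1 y2 y3 ≤ P1 α x1 x2 x3 ∧
      P1 α x1 x2 x3 ≤ (1 + δ) / (1 - δ) * P1 α y1 y2 y3) ∧
    ((1 - δ) / (1 + δ) * P2 α y1 y2 y3 ≤ P2 α x1 x2 x3 ∧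
      P2 α x1 x2 x3 ≤ (1 + δ) / (1 - δ) * P2 α y1 y2 y3) ∧
    ((1 - δ) / (1 + δ) * P3 α y1 y2 y3 ≤ P3 α x1 x2 x3 ∧
      P3 α x1 x2 x3 ≤ (1 + δ) / (1 - δ) * P3 α y1 y2 y3) := by
  obtain ⟨ha0, ha1⟩ := hα
  obtain ⟨hd0, hd1⟩ := hδ
  have h1δ : (0:ℝ) < 1 - δ := by linarith
  have h2δ : (0:ℝ) < 1 + δ := by linarith
  have hDx : (0:ℝ) < x1 * x2 + x1 * x3 + x2 * x3 := by positivity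
  have hDy : (0:ℝ) < y1 * y2 + y1 * y3 + y2 * y3 := by positivity
  -- monomial lemma instances
  have L12 := mono_low δ x1 x2 x3 y1 y2 y3 hd0 hx1 hx2 hx3 hy1 hy2 hy3 h1l h2l h3u
  have U12 := mono_up δ x1 x2 x3 y1 y2 y3 hd0 hx1 hx2 hx3 hy1 hy2 hy3 h1u h2u h3l
  have L13 := mono_low δ x1 x3 x2 y1 y3 y2 hd0 hx1 hx3 hx2 hy1 hy3 hy2 h1l h3l h2u
  have U13 := mono_up δ x1 x3 x2 y1 y3 y2 hd0 hx1 hx3 hx2 hy1 hy3 hy2 h1u h3u h2l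
  have L23 := mono_low δ x2 x3 x1 y2 y3 y1 hd0 hx2 hx3 hx1 hy2 hy3 hy1 h2l h3l h1u
  have U23 := mono_up δ x2 x3 x1 y2 y3 y1 hd0 hx2 hx3 hx1 hy2 hy3 hy1 h2u h3u h1l
  have hP1x : P1 α x1 x2 x3 = (α * (x1 * x2) + x1 * x3) / (x1 * x2 + x1 * x3 + x2 * x3) := by
    unfold P1; ring_nf
  have hP1y : P1 α y1 y2 y3 = (α * (y1 * y2) + y1 * y3) / (y1 * y2 + y1 * y3 + y2 * y3) := by
    unfold P1; ring_nf
  have hP2x : P2 α x1 x2 x3 = ((1 - α) * (x1 * x2) + x2 * x3) / (x1 * x2 + x1 * x3 + x2 * x3) := by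
    unfold P2 P1; field_simp; ring
  have hP2y : P2 α y1 y2 y3 = ((1 - α) * (y1 * y2) + y2 * y3) / (y1 * y2 + y1 * y3 + y2 * y3) := by
    unfold P2 P1; field_simp; ring
  have hP3x : P3 α x1 x2 x3 = (α * (x2 * x3) + (1 - α) * (x1 * x3)) / (x1 * x2 + x1 * x3 + x2 * x3) := by
    unfold P3; ring_nf
  have hP3y : P3 α y1 y2 y3 = (α * (y2 * y3) + (1 - α) * (y1 * y3)) / (y1 * y2 + y1 * y3 + y2 * y3) := by
    unfold P3; ring_nf
  rw [hP1x, hP1y, hP2x, hP2y, hP3x, hP3y]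
  have tL12 := mul_le_mul_of_nonneg_left L12 ha0.le
  have tU12 := mul_le_mul_of_nonneg_left U12 ha0.le
  have tL12' := mul_le_mul_of_nonneg_left L12 (by linarith : (0:ℝ) ≤ 1 - α)
  have tU12' := mul_le_mul_of_nonneg_left U12 (by linarith : (0:ℝ) ≤ 1 - α)
  have tL23 := mul_le_mul_of_nonneg_left L23 ha0.le
  have tU23 := mul_le_mul_of_nonneg_left U23 ha0.le
  have tL13' := mul_le_mul_of_nonneg_left L13 (by linarith : (0:ℝ) ≤ 1 - α)
  have tU13' := mul_le_mul_of_nonneg_left U13 (by linarith : (0:ℝ) ≤ 1 - α)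
  refine ⟨⟨?_, ?_⟩, ⟨?_, ?_⟩, ⟨?_, ?_⟩⟩
  · rw [div_mul_div_comm, div_le_div_iff₀ (by positivity) hDx]
    ring_nf at tL12 L13 ⊢; linarith [tL12, L13]
  · rw [div_mul_div_comm, div_le_div_iff₀ hDx (by positivity)]
    ring_nf at tU12 U13 ⊢; linarith [tU12, U13]
  · rw [div_mul_div_comm, div_le_div_iff₀ (by positivity) hDx]
    ring_nf at tL12' L23 ⊢; linarith [tL12', L23]
  · rw [div_mul_div_comm, div_le_div_iff₀ hDx (by positivity)]
    ring_nf at tU12' U23 ⊢; linarith [tU12', U23]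
  · rw [div_mul_div_comm, div_le_div_iff₀ (by positivity) hDx]
    ring_nf at tL23 tL13' ⊢; linarith [tL23, tL13']
  · rw [div_mul_div_comm, div_le_div_iff₀ hDx (by positivity)]
    ring_nf at tU23 tU13' ⊢; linarith [tU23, tU13']
end

section
/- Fix α ∈ (0,1) and positive reals ℓ1 ≤ ℓ2 with ℓ2 < ℓ1 + ℓ3 and ℓ3 < ℓ1 + ℓ2. Define N1(w1,w3) = w1·(1−w1)·(ℓ3·(α−w1) + (ℓ2−ℓ1)·w3) and N3(w1,w3) = w3·(ℓ2·(1−α)·w1 + ℓ1·α·(1−w1) − ℓ3·w1·(1−w1) − w3·(ℓ1 + w1·(ℓ2−ℓ1))). Then for all (w1,w3) ∈ [0,1]², N1(w1,w3) = 0 and N3(w1,w3) = 0 hold simultaneously if and only if (w1,w3) ∈ {(0,0), (0,α), (α,0), (β1,β3), (1,1−α), (1,0)}, where β1 = α·ℓ1·(ℓ3+ℓ2−ℓ1)/(ℓ1·ℓ3 + (ℓ2−ℓ1)·((1−α)·(ℓ3−ℓ2) + α·ℓ1)) and β3 = α·(1−α)·ℓ3·(ℓ1+ℓ2−ℓ3)/(α·(ℓ2−ℓ1)·(ℓ1+ℓ2−ℓ3)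 + ℓ2·(ℓ1−ℓ2+ℓ3)). -/
/-- The common zeros, on `[0,1]²`, of the numerators `N1` and `N3` of the two coordinates
of the vector field driving the stochastic approximation for the two-nest ants process on
the `(ℓ1,ℓ2,ℓ3)`-triangle are exactly the six points
`(0,0), (0,α), (α,0), (β1,β3), (1,1-α), (1,0)`. -/
theorem statement7 (α ℓ1 ℓ2 ℓ3 : ℝ) (hα : α ∈ Set.Ioo (0:ℝ) 1)
    (h1 : 0 < ℓ1) (h2 : 0 < ℓ2) (h3 : 0 < ℓ3) (h12 : ℓ1 ≤ ℓ2)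
    (h213 : ℓ2 < ℓ1 + ℓ3) (h312 : ℓ3 < ℓ1 + ℓ2) :
    ∀ w1 ∈ Set.Icc (0:ℝ) 1, ∀ w3 ∈ Set.Icc (0:ℝ) 1,
      (w1 * (1 - w1) * (ℓ3 * (α - w1) + (ℓ2 - ℓ1) * w3) = 0 ∧
        w3 * (ℓ2 * (1 - α) * w1 + ℓ1 * α * (1 - w1) - ℓ3 * w1 * (1 - w1)
              - w3 * (ℓ1 + w1 * (ℓ2 - ℓ1))) = 0)
      ↔ (w1, w3) ∈ ({((0:ℝ), (0:ℝ)), (0, α), (α, 0),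
          (α * ℓ1 * (ℓ3 + ℓ2 - ℓ1)
              / (ℓ1 * ℓ3 + (ℓ2 - ℓ1) * ((1 - α) * (ℓ3 - ℓ2) + α * ℓ1)),
            α * (1 - α) * ℓ3 * (ℓ1 + ℓ2 - ℓ3)
              / (α * (ℓ2 - ℓ1) * (ℓ1 + ℓ2 - ℓ3) + ℓ2 * (ℓ1 - ℓ2 + ℓ3))),
          (1, 1 - α), (1, 0)} : Set (ℝ × ℝ)) := by
  obtain ⟨ha0, ha1⟩ := hα
  intro w1 hw1 w3 hw3
  obtain ⟨hw10, hw11⟩ := hw1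
  obtain ⟨hw30, hw31⟩ := hw3
  have hD1 : 0 < ℓ1 * ℓ3 + (ℓ2 - ℓ1) * ((1 - α) * (ℓ3 - ℓ2) + α * ℓ1) := by
    nlinarith [mul_pos h2 (by linarith : (0:ℝ) < ℓ1 + ℓ3 - ℓ2),
      mul_nonneg (mul_nonneg ha0.le (by linarith : (0:ℝ) ≤ ℓ2 - ℓ1))
        (by linarith : (0:ℝ) ≤ ℓ1 + ℓ2 - ℓ3)]
  have hD3 : 0 < α * (ℓ2 - ℓ1) * (ℓ1 + ℓ2 - ℓ3) + ℓ2 * (ℓ1 - ℓ2 + ℓ3) := by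
    nlinarith [mul_pos h2 (by linarith : (0:ℝ) < ℓ1 - ℓ2 + ℓ3),
      mul_nonneg (mul_nonneg ha0.le (by linarith : (0:ℝ) ≤ ℓ2 - ℓ1))
        (by linarith : (0:ℝ) ≤ ℓ1 + ℓ2 - ℓ3)]
  simp only [Set.mem_insert_iff, Set.mem_singleton_iff, Prod.mk.injEq]
  constructor
  · rintro ⟨he1, he2⟩
    rcases mul_eq_zero.1 he1 with h | hbr1
    · rcases mul_eq_zero.1 h with h0 | h1'
      · -- w1 = 0
        subst h0
        rcases mul_eq_zero.1 he2 with h30 | h3e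
        · exact Or.inl ⟨rfl, h30⟩
        · have : ℓ1 * (α - w3) = 0 := by linear_combination h3e
          rcases mul_eq_zero.1 this with h | h
          · exact absurd h h1.ne'
          · exact Or.inr (Or.inl ⟨rfl, by linarith⟩)
      · -- w1 = 1
        have hw1e : w1 = 1 := by linarith
        subst hw1e
        rcases mul_eq_zero.1 he2 with h30 | h3e
        · exact Or.inr (Or.inr (Or.inr (Or.inr (Or.inr ⟨rfl, h30⟩))))
        · have : ℓ2 * ((1 - α) - w3) = 0 := by linear_combination h3e
          rcases mul_eq_zero.1 this with h | h
          · exact absurd h h2.ne'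
          · exact Or.inr (Or.inr (Or.inr (Or.inr (Or.inl ⟨rfl, by linarith⟩))))
    · rcases mul_eq_zero.1 he2 with h30 | hbr3
      · -- w3 = 0, so w1 = α
        subst h30
        have : ℓ3 * (α - w1) = 0 := by linear_combination hbr1
        rcases mul_eq_zero.1 this with h | h
        · exact absurd h h3.ne'
        · exact Or.inr (Or.inr (Or.inl ⟨by linarith, rfl⟩))
      · -- interior: both brackets vanish
        refine Or.inr (Or.inr (Or.inr (Or.inl ⟨?_, ?_⟩)))
        · rw [eq_div_iff hD1.ne']
          linear_combination (-(ℓ1 + w1 * (ℓ2 - ℓ1))) * hbr1 + (-(ℓ2 - ℓ1)) * hbr3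
        · have hw1eq : w1 * (ℓ1 * ℓ3 + (ℓ2 - ℓ1) * ((1 - α) * (ℓ3 - ℓ2) + α * ℓ1))
              = α * ℓ1 * (ℓ3 + ℓ2 - ℓ1) := by
            linear_combination (-(ℓ1 + w1 * (ℓ2 - ℓ1))) * hbr1 + (-(ℓ2 - ℓ1)) * hbr3
          have hfac : 0 < ℓ1 + w1 * (ℓ2 - ℓ1) := by nlinarith
          set D1 : ℝ := ℓ1 * ℓ3 + (ℓ2 - ℓ1) * ((1 - α) * (ℓ3 - ℓ2) + α * ℓ1) with hD1def
          set D3 : ℝ := α * (ℓ2 - ℓ1) * (ℓ1 + ℓ2 - ℓ3) + ℓ2 * (ℓ1 - ℓ2 + ℓ3) with hD3def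
          have key : (w3 * D3 - α * (1 - α) * ℓ3 * (ℓ1 + ℓ2 - ℓ3))
              * ((ℓ1 + w1 * (ℓ2 - ℓ1)) * D1 ^ 2) = 0 := by
            linear_combination (-(D3 * D1 ^ 2)) * hbr3
              + ((D3 * ℓ3) * D1 * w1
                  + (D3 * (ℓ2 * (1 - α) - ℓ1 * α - ℓ3)
                      - α * (1 - α) * ℓ3 * (ℓ1 + ℓ2 - ℓ3) * (ℓ2 - ℓ1)) * D1
                  + (D3 * ℓ3) * (α * ℓ1 * (ℓ3 + ℓ2 - ℓ1))) * hw1eq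
          have hpos : (0:ℝ) < (ℓ1 + w1 * (ℓ2 - ℓ1)) * D1 ^ 2 :=
            mul_pos hfac (pow_pos hD1 2)
          have := (mul_eq_zero.1 key).resolve_right hpos.ne'
          rw [eq_div_iff hD3.ne']
          linarith [this]
  · rintro (⟨hw1e, hw3e⟩ | ⟨hw1e, hw3e⟩ | ⟨hw1e, hw3e⟩ | ⟨hw1e, hw3e⟩ |
      ⟨hw1e, hw3e⟩ | ⟨hw1e, hw3e⟩) <;> subst hw1e <;> subst hw3e
    · exact ⟨by ring, by ring⟩
    · exact ⟨by ring, by ring⟩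
    · exact ⟨by ring, by ring⟩
    · have hb1 : ℓ3 * (α - α * ℓ1 * (ℓ3 + ℓ2 - ℓ1)
            / (ℓ1 * ℓ3 + (ℓ2 - ℓ1) * ((1 - α) * (ℓ3 - ℓ2) + α * ℓ1)))
          + (ℓ2 - ℓ1) * (α * (1 - α) * ℓ3 * (ℓ1 + ℓ2 - ℓ3)
            / (α * (ℓ2 - ℓ1) * (ℓ1 + ℓ2 - ℓ3) + ℓ2 * (ℓ1 - ℓ2 + ℓ3))) = 0 := by
        have e1 := div_mul_cancel₀ (α * ℓ1 * (ℓ3 + ℓ2 - ℓ1)) hD1.ne'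
        have e3 := div_mul_cancel₀ (α * (1 - α) * ℓ3 * (ℓ1 + ℓ2 - ℓ3)) hD3.ne'
        set x := α * ℓ1 * (ℓ3 + ℓ2 - ℓ1) / (ℓ1 * ℓ3 + (ℓ2 - ℓ1) * ((1 - α) * (ℓ3 - ℓ2) + α * ℓ1))
        set y := α * (1 - α) * ℓ3 * (ℓ1 + ℓ2 - ℓ3) / (α * (ℓ2 - ℓ1) * (ℓ1 + ℓ2 - ℓ3) + ℓ2 * (ℓ1 - ℓ2 + ℓ3))
        have h : (ℓ3 * (α - x) + (ℓ2 - ℓ1) * y) * ((ℓ1 * ℓ3 + (ℓ2 - ℓ1) * ((1 - α) * (ℓ3 - ℓ2) + α * ℓ1)) * (α * (ℓ2 - ℓ1) * (ℓ1 + ℓ2 - ℓ3) + ℓ2 * (ℓ1 - ℓ2 + ℓ3))) = 0 := by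
          linear_combination (-ℓ3 * (α * (ℓ2 - ℓ1) * (ℓ1 + ℓ2 - ℓ3) + ℓ2 * (ℓ1 - ℓ2 + ℓ3))) * e1 + ((ℓ2 - ℓ1) * (ℓ1 * ℓ3 + (ℓ2 - ℓ1) * ((1 - α) * (ℓ3 - ℓ2) + α * ℓ1))) * e3
        exact (mul_eq_zero.1 h).resolve_right (mul_pos hD1 hD3).ne'
      have hb3 : ℓ2 * (1 - α) * (α * ℓ1 * (ℓ3 + ℓ2 - ℓ1)
            / (ℓ1 * ℓ3 + (ℓ2 - ℓ1) * ((1 - α) * (ℓ3 - ℓ2) + α * ℓ1)))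
          + ℓ1 * α * (1 - α * ℓ1 * (ℓ3 + ℓ2 - ℓ1)
            / (ℓ1 * ℓ3 + (ℓ2 - ℓ1) * ((1 - α) * (ℓ3 - ℓ2) + α * ℓ1)))
          - ℓ3 * (α * ℓ1 * (ℓ3 + ℓ2 - ℓ1)
            / (ℓ1 * ℓ3 + (ℓ2 - ℓ1) * ((1 - α) * (ℓ3 - ℓ2) + α * ℓ1)))
            * (1 - α * ℓ1 * (ℓ3 + ℓ2 - ℓ1)
            / (ℓ1 * ℓ3 + (ℓ2 - ℓ1) * ((1 - α) * (ℓ3 - ℓ2) + α * ℓ1)))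
          - (α * (1 - α) * ℓ3 * (ℓ1 + ℓ2 - ℓ3)
            / (α * (ℓ2 - ℓ1) * (ℓ1 + ℓ2 - ℓ3) + ℓ2 * (ℓ1 - ℓ2 + ℓ3)))
            * (ℓ1 + (α * ℓ1 * (ℓ3 + ℓ2 - ℓ1)
            / (ℓ1 * ℓ3 + (ℓ2 - ℓ1) * ((1 - α) * (ℓ3 - ℓ2) + α * ℓ1))) * (ℓ2 - ℓ1)) = 0 := by
        field_simp
        ring
      exact ⟨mul_eq_zero_of_right _ hb1, mul_eq_zero_of_right _ hb3⟩
    · exact ⟨by ring, by ring⟩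
    · exact ⟨by ring, by ring⟩
end

section
/- Fix α ∈ (0,1) and positive reals ℓ1, ℓ2, ℓ3 with ℓ1 ≤ ℓ2 ≤ ℓ1 + ℓ3 and ℓ3 ≤ ℓ1 + ℓ2. Then β1 ≥ α, where β1 = α·ℓ1·(ℓ3+ℓ2−ℓ1)/(ℓ1·ℓ3 + (ℓ2−ℓ1)·((1−α)·(ℓ3−ℓ2) + α·ℓ1)); in particular β1 > 0. Moreover β1 − α = α·(ℓ2−ℓ1)·(1−α)·(ℓ1+ℓ2−ℓ3)/(ℓ1·ℓ3 + (ℓ2−ℓ1)·((1−α)·(ℓ3−ℓ2) + α·ℓ1)). -/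
/-- The first coordinate `β1` of the interior zero of the vector field of the stochastic
approximation for the two-nest ants process on the `(ℓ1,ℓ2,ℓ3)`-triangle satisfies
`β1 ≥ α` (in particular `β1 > 0`), together with the closed form for `β1 - α`. -/
theorem statement10 (α ℓ1 ℓ2 ℓ3 : ℝ) (hα : α ∈ Set.Ioo (0:ℝ) 1)
    (h1 : 0 < ℓ1) (h2 : 0 < ℓ2) (h3 : 0 < ℓ3)
    (h12 : ℓ1 ≤ ℓ2) (h213 : ℓ2 ≤ ℓ1 + ℓ3) (h312 : ℓ3 ≤ ℓ1 + ℓ2) :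
    α ≤ α * ℓ1 * (ℓ3 + ℓ2 - ℓ1)
        / (ℓ1 * ℓ3 + (ℓ2 - ℓ1) * ((1 - α) * (ℓ3 - ℓ2) + α * ℓ1)) ∧
    0 < α * ℓ1 * (ℓ3 + ℓ2 - ℓ1)
        / (ℓ1 * ℓ3 + (ℓ2 - ℓ1) * ((1 - α) * (ℓ3 - ℓ2) + α * ℓ1)) ∧
    α * ℓ1 * (ℓ3 + ℓ2 - ℓ1)
        / (ℓ1 * ℓ3 + (ℓ2 - ℓ1) * ((1 - α) * (ℓ3 - ℓ2) + α * ℓ1)) - α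
      = α * (ℓ2 - ℓ1) * (1 - α) * (ℓ1 + ℓ2 - ℓ3)
        / (ℓ1 * ℓ3 + (ℓ2 - ℓ1) * ((1 - α) * (ℓ3 - ℓ2) + α * ℓ1)) := by
  obtain ⟨hα0, hα1⟩ := hα
  have hD : 0 < ℓ1 * ℓ3 + (ℓ2 - ℓ1) * ((1 - α) * (ℓ3 - ℓ2) + α * ℓ1) := by
    nlinarith [mul_nonneg (sub_pos.mpr hα1).le (mul_nonneg h2.le (by linarith : (0:ℝ) ≤ ℓ1 + ℓ3 - ℓ2)),
      mul_pos hα0 (mul_pos h1 (by linarith : (0:ℝ) < ℓ3 + ℓ2 - ℓ1))]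
  have hdiff : α * ℓ1 * (ℓ3 + ℓ2 - ℓ1)
        / (ℓ1 * ℓ3 + (ℓ2 - ℓ1) * ((1 - α) * (ℓ3 - ℓ2) + α * ℓ1)) - α
      = α * (ℓ2 - ℓ1) * (1 - α) * (ℓ1 + ℓ2 - ℓ3)
        / (ℓ1 * ℓ3 + (ℓ2 - ℓ1) * ((1 - α) * (ℓ3 - ℓ2) + α * ℓ1)) := by
    field_simp
    ring
  have hge : α ≤ α * ℓ1 * (ℓ3 + ℓ2 - ℓ1)
        / (ℓ1 * ℓ3 + (ℓ2 - ℓ1) * ((1 - α) * (ℓ3 - ℓ2) + α * ℓ1)) := by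
    have hnum : 0 ≤ α * (ℓ2 - ℓ1) * (1 - α) * (ℓ1 + ℓ2 - ℓ3) := by
      apply mul_nonneg
      apply mul_nonneg
      apply mul_nonneg hα0.le
      all_goals linarith
    have := div_nonneg hnum hD.le
    linarith [hdiff ▸ this]
  exact ⟨hge, lt_of_lt_of_le hα0 hge, hdiff⟩
end

section
/- Fix a real α and positive reals ℓ1, ℓ2, ℓ3. For w1 ∈ (0,1) and w3 ∈ (0,1], define D(w1,w3) = w3·(ℓ1 + w1·(ℓ2−ℓ1)) + ℓ3·w1·(1−w1), g(w1,w3) = −D(w1,w3)/(w1·w3·(1−w1)), F1(w1,w3) = w1·(1−w1)·(ℓ3·(α−w1) + (ℓ2−ℓ1)·w3)/D(w1,w3) and F3(w1,w3) = w3·(ℓ2·(1−α)·w1 + ℓ1·α·(1−w1) − ℓ3·w1·(1−w1) − w3·(ℓ1 + w1·(ℓ2−ℓ1)))/D(w1,w3). Then for every such (w1,w3): (i) the function u ↦ g(u,w3)·F1(u,w3) has derivative ℓ3/w3 at u = w1; (ii) the function v ↦ g(w1,v)·F3(w1,v) has derivative (ℓ2−ℓ1)/(1−w1) + ℓ1/(w1·(1−w1))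 at v = w3; and (iii) ℓ3/w3 + (ℓ2−ℓ1)/(1−w1) + ℓ1/(w1·(1−w1)) = −g(w1,w3) > 0. -/
/-- The Bendixson–Dulac condition for the vector field `(F1, F3)` with Dulac function `g`:
on `(0,1) × (0,1]`, (i) `∂(g F1)/∂w1 = ℓ3/w3`, (ii)
`∂(g F3)/∂w3 = (ℓ2-ℓ1)/(1-w1) + ℓ1/(w1 (1-w1))`, and (iii) their sum equals
`-g(w1,w3) > 0`. -/
theorem statement13 (α ℓ1 ℓ2 ℓ3 : ℝ) (h1 : 0 < ℓ1) (h2 : 0 < ℓ2) (h3 : 0 < ℓ3)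
    (w1 w3 : ℝ) (hw1 : w1 ∈ Set.Ioo (0:ℝ) 1) (hw3 : w3 ∈ Set.Ioc (0:ℝ) 1) :
    HasDerivAt (fun u : ℝ =>
        (-((w3 * (ℓ1 + u * (ℓ2 - ℓ1)) + ℓ3 * u * (1 - u)) / (u * w3 * (1 - u))))
          * (u * (1 - u) * (ℓ3 * (α - u) + (ℓ2 - ℓ1) * w3)
              / (w3 * (ℓ1 + u * (ℓ2 - ℓ1)) + ℓ3 * u * (1 - u))))
      (ℓ3 / w3) w1 ∧
    HasDerivAt (fun v : ℝ =>
        (-((v * (ℓ1 + w1 * (ℓ2 - ℓ1)) + ℓ3 * w1 * (1 - w1)) / (w1 * v * (1 - w1))))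
          * (v * (ℓ2 * (1 - α) * w1 + ℓ1 * α * (1 - w1) - ℓ3 * w1 * (1 - w1)
                  - v * (ℓ1 + w1 * (ℓ2 - ℓ1)))
              / (v * (ℓ1 + w1 * (ℓ2 - ℓ1)) + ℓ3 * w1 * (1 - w1))))
      ((ℓ2 - ℓ1) / (1 - w1) + ℓ1 / (w1 * (1 - w1))) w3 ∧
    ℓ3 / w3 + ((ℓ2 - ℓ1) / (1 - w1) + ℓ1 / (w1 * (1 - w1)))
      = -(-((w3 * (ℓ1 + w1 * (ℓ2 - ℓ1)) + ℓ3 * w1 * (1 - w1)) / (w1 * w3 * (1 - w1)))) ∧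
    0 < -(-((w3 * (ℓ1 + w1 * (ℓ2 - ℓ1)) + ℓ3 * w1 * (1 - w1)) / (w1 * w3 * (1 - w1)))) := by
  obtain ⟨hw1a, hw1b⟩ := hw1
  obtain ⟨hw3a, hw3b⟩ := hw3
  have hw1b' : 0 < 1 - w1 := by linarith
  have hw3ne : w3 ≠ 0 := ne_of_gt hw3a
  constructor
  · -- part (i)
    have hlin : HasDerivAt
        (fun u : ℝ => (ℓ3 / w3) * u + (-(ℓ3 * α + (ℓ2 - ℓ1) * w3) / w3)) (ℓ3 / w3) w1 := by
      simpa using ((hasDerivAt_id w1).const_mul (ℓ3 / w3)).add_const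
        (-(ℓ3 * α + (ℓ2 - ℓ1) * w3) / w3)
    apply hlin.congr_of_eventuallyEq
    have hmem : Set.Ioo (0:ℝ) 1 ∈ nhds w1 :=
      isOpen_Ioo.mem_nhds ⟨hw1a, hw1b⟩
    filter_upwards [hmem] with u hu
    obtain ⟨hua, hub⟩ := hu
    have hub' : 0 < 1 - u := by linarith
    have hL : 0 < ℓ1 + u * (ℓ2 - ℓ1) := by nlinarith
    have hD : 0 < w3 * (ℓ1 + u * (ℓ2 - ℓ1)) + ℓ3 * u * (1 - u) := by positivity
    field_simp
    ring
  constructor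
  · -- part (ii)
    have hL : 0 < ℓ1 + w1 * (ℓ2 - ℓ1) := by nlinarith
    have hlin : HasDerivAt
        (fun v : ℝ => ((ℓ1 + w1 * (ℓ2 - ℓ1)) / (w1 * (1 - w1))) * v +
          (-(ℓ2 * (1 - α) * w1 + ℓ1 * α * (1 - w1) - ℓ3 * w1 * (1 - w1)) / (w1 * (1 - w1))))
        ((ℓ2 - ℓ1) / (1 - w1) + ℓ1 / (w1 * (1 - w1))) w3 := by
      have : ((ℓ1 + w1 * (ℓ2 - ℓ1)) / (w1 * (1 - w1)))
          = (ℓ2 - ℓ1) / (1 - w1) + ℓ1 / (w1 * (1 - w1)) := by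
        field_simp
        ring
      rw [← this]
      simpa using ((hasDerivAt_id w3).const_mul ((ℓ1 + w1 * (ℓ2 - ℓ1)) / (w1 * (1 - w1)))).add_const
        (-(ℓ2 * (1 - α) * w1 + ℓ1 * α * (1 - w1) - ℓ3 * w1 * (1 - w1)) / (w1 * (1 - w1)))
    apply hlin.congr_of_eventuallyEq
    have hmem : Set.Ioi (0:ℝ) ∈ nhds w3 := isOpen_Ioi.mem_nhds hw3a
    filter_upwards [hmem] with v hv
    have hv : (0:ℝ) < v := hv
    have hD : 0 < v * (ℓ1 + w1 * (ℓ2 - ℓ1)) + ℓ3 * w1 * (1 - w1) := by positivity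
    field_simp
    ring
  constructor
  · -- part (iii) equality
    field_simp
    ring
  · -- positivity
    have hL : 0 < ℓ1 + w1 * (ℓ2 - ℓ1) := by nlinarith
    have hD : 0 < w3 * (ℓ1 + w1 * (ℓ2 - ℓ1)) + ℓ3 * w1 * (1 - w1) := by positivity
    rw [neg_neg]
    positivity
end

section
/- Fix α ∈ (0,1) and positive reals ℓ1, ℓ2, ℓ3 with ℓ3 < ℓ1 + ℓ2. Then there exist δ > 0 and κ > 0 such that for all reals w1 ∈ [0,1] and w3 ∈ (0,κ] satisfying α − δ ≤ w1 ≤ α + δ + w3, one has w3·(α·ℓ1·(1−w1) + (1−α)·ℓ2·w1)/(ℓ3·w1·(1−w1) + ℓ2·w1·w3 + ℓ1·(1−w1)·w3) > w3. -/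
set_option maxHeartbeats 1000000

/-- Strict domination of the identity by `p3(w1, 1-w1, w3)` near `(w1, w3) = (α, 0)` when
`ℓ3 < ℓ1 + ℓ2`: the key step showing that the normalized reinforcement count of branch 3
of the `(ℓ1,ℓ2,ℓ3)`-triangle has strictly positive liminf. -/
theorem statement16 (α ℓ1 ℓ2 ℓ3 : ℝ) (hα : α ∈ Set.Ioo (0:ℝ) 1)
    (h1 : 0 < ℓ1) (h2 : 0 < ℓ2) (h3 : 0 < ℓ3) (h312 : ℓ3 < ℓ1 + ℓ2) :
    ∃ δ > (0:ℝ), ∃ κ > (0:ℝ), ∀ w1 ∈ Set.Icc (0:ℝ) 1, ∀ w3 ∈ Set.Ioc (0:ℝ) κ,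
      α - δ ≤ w1 → w1 ≤ α + δ + w3 →
      w3 < w3 * (α * ℓ1 * (1 - w1) + (1 - α) * ℓ2 * w1)
          / (ℓ3 * w1 * (1 - w1) + ℓ2 * w1 * w3 + ℓ1 * (1 - w1) * w3) := by
  obtain ⟨hα0, hα1⟩ := hα
  set c : ℝ := α * (1 - α) * (ℓ1 + ℓ2 - ℓ3) with hc
  have hcpos : 0 < c := by
    apply mul_pos (mul_pos hα0 (by linarith)) (by linarith)
  have hLpos : 0 < ℓ1 + ℓ2 + ℓ3 := by linarith
  refine ⟨c / (4 * (ℓ1 + ℓ2 + ℓ3)), by positivity, c / (4 * (ℓ1 + ℓ2 + ℓ3)), by positivity,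
    ?_⟩
  intro w1 hw1 w3 hw3 hlo hhi
  obtain ⟨hw10, hw11⟩ := hw1
  obtain ⟨hw30, hw3κ⟩ := hw3
  set δ : ℝ := c / (4 * (ℓ1 + ℓ2 + ℓ3)) with hδ
  have hδpos : 0 < δ := by positivity
  have hδc : 4 * (ℓ1 + ℓ2 + ℓ3) * δ = c := by
    rw [hδ]; field_simp
  set D : ℝ := ℓ3 * w1 * (1 - w1) + ℓ2 * w1 * w3 + ℓ1 * (1 - w1) * w3 with hD
  have hDpos : 0 < D := by
    rcases le_total ℓ1 ℓ2 with h | h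
    · nlinarith [mul_nonneg (mul_nonneg h3.le hw10) (by linarith : (0:ℝ) ≤ 1 - w1),
        mul_nonneg (mul_nonneg (by linarith : (0:ℝ) ≤ ℓ2 - ℓ1) hw10) hw30.le,
        mul_pos h1 hw30]
    · nlinarith [mul_nonneg (mul_nonneg h3.le hw10) (by linarith : (0:ℝ) ≤ 1 - w1),
        mul_nonneg (mul_nonneg (by linarith : (0:ℝ) ≤ ℓ1 - ℓ2) (by linarith : (0:ℝ) ≤ 1 - w1)) hw30.le,
        mul_pos h2 hw30]
  set N : ℝ := α * ℓ1 * (1 - w1) + (1 - α) * ℓ2 * w1 with hN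
  have key : D < N := by
    have he1 : w1 - α ≤ 2 * δ := by linarith
    have he2 : -(2 * δ) ≤ w1 - α := by linarith
    have ht1 : -(2 * δ * (ℓ1 + ℓ2)) ≤ (w1 - α) * (-α * ℓ1 + (1 - α) * ℓ2) := by
      nlinarith [mul_nonneg (by linarith : (0:ℝ) ≤ 2 * δ - (w1 - α))
          (by nlinarith : (0:ℝ) ≤ (ℓ1 + ℓ2) - (-α * ℓ1 + (1 - α) * ℓ2)),
        mul_nonneg (by linarith : (0:ℝ) ≤ 2 * δ + (w1 - α))
          (by nlinarith : (0:ℝ) ≤ (-α * ℓ1 + (1 - α) * ℓ2) + (ℓ1 + ℓ2))]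
    have hes : (w1 - α) * (1 - w1 - α) ≤ 2 * δ := by
      nlinarith [mul_nonneg (by linarith : (0:ℝ) ≤ 2 * δ - (w1 - α))
          (by linarith : (0:ℝ) ≤ 1 + (1 - w1 - α)),
        mul_nonneg (by linarith : (0:ℝ) ≤ 2 * δ + (w1 - α))
          (by linarith : (0:ℝ) ≤ 1 - (1 - w1 - α))]
    have ht2 : ℓ3 * ((w1 - α) * (1 - w1 - α)) ≤ 2 * δ * ℓ3 := by
      have := mul_le_mul_of_nonneg_left hes h3.le
      linarith [this, mul_comm ℓ3 (2 * δ)]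
    have ht3 : w3 * (ℓ2 * w1 + ℓ1 * (1 - w1)) ≤ δ * (ℓ1 + ℓ2) := by
      nlinarith [mul_nonneg (by linarith : (0:ℝ) ≤ δ - w3)
          (by nlinarith : (0:ℝ) ≤ ℓ2 * w1 + ℓ1 * (1 - w1)),
        mul_nonneg hw30.le
          (by nlinarith : (0:ℝ) ≤ (ℓ1 + ℓ2) - (ℓ2 * w1 + ℓ1 * (1 - w1)))]
    have hid : N - D = c + (w1 - α) * (-α * ℓ1 + (1 - α) * ℓ2)
        - ℓ3 * ((w1 - α) * (1 - w1 - α)) - w3 * (ℓ2 * w1 + ℓ1 * (1 - w1)) := by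
      rw [hN, hD, hc]; ring
    nlinarith [ht1, ht2, ht3, hid, hδc, mul_pos hδpos hLpos, mul_pos hδpos h3,
      mul_pos hδpos (show (0:ℝ) < ℓ1 + ℓ2 by linarith)]
  have h1D : 1 < N / D := (one_lt_div hDpos).mpr key
  calc w3 = w3 * 1 := (mul_one w3).symm
    _ < w3 * (N / D) := by exact (mul_lt_mul_iff_right₀ hw30).mpr h1D
    _ = w3 * N / D := by ring
end

section
/- Fix α ∈ (0,1) and positive reals ℓ1, ℓ2, ℓ3 with ℓ2 < ℓ1 + ℓ3. Then there exists δ > 0 such that for all reals w2 ∈ (0,δ) and w3 ∈ (1−α−δ, 1−α+δ) ∩ [0,1], one has 1 − (α·ℓ3·(1−w2)·w2 + ℓ2·(1−w2)·w3)/(ℓ3·(1−w2)·w2 + ℓ2·(1−w2)·w3 + ℓ1·w2·w3) > w2. -/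
/-- Strict domination of the identity by `p2(1-w2, w2, w3)` near `(w2, w3) = (0, 1-α)`
when `ℓ2 < ℓ1 + ℓ3`: the key step showing that the normalized reinforcement count of
branch 1 of the `(ℓ1,ℓ2,ℓ3)`-triangle has limsup strictly less than 1. -/
theorem statement17 (α ℓ1 ℓ2 ℓ3 : ℝ) (hα : α ∈ Set.Ioo (0:ℝ) 1)
    (h1 : 0 < ℓ1) (h2 : 0 < ℓ2) (h3 : 0 < ℓ3) (h213 : ℓ2 < ℓ1 + ℓ3) :
    ∃ δ > (0:ℝ), ∀ w2 ∈ Set.Ioo (0:ℝ) δ,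
      ∀ w3 ∈ Set.Ioo (1 - α - δ) (1 - α + δ) ∩ Set.Icc (0:ℝ) 1,
      w2 < 1 - (α * ℓ3 * (1 - w2) * w2 + ℓ2 * (1 - w2) * w3)
          / (ℓ3 * (1 - w2) * w2 + ℓ2 * (1 - w2) * w3 + ℓ1 * w2 * w3) := by
  obtain ⟨hα0, hα1⟩ := hα
  set c : ℝ := (1 - α) * (ℓ1 + ℓ3 - ℓ2) with hc
  have hcpos : 0 < c := by
    apply mul_pos <;> linarith
  set M : ℝ := |ℓ1 - ℓ2| with hM
  have hM1 : ℓ1 - ℓ2 ≤ M := le_abs_self _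
  have hM2 : -(ℓ1 - ℓ2) ≤ M := neg_le_abs _
  have hMpos : 0 < ℓ3 + M + 1 := by
    have : 0 ≤ M := abs_nonneg _
    linarith
  refine ⟨min (c / (2 * (ℓ3 + M + 1))) (min ((1 - α)/2) (1/2)), ?_, ?_⟩
  · apply lt_min
    · positivity
    · apply lt_min <;> linarith
  · intro w2 hw2 w3 hw3
    obtain ⟨hw20, hw2δ⟩ := hw2
    obtain ⟨⟨hw3l, hw3r⟩, hw30, hw31⟩ := hw3
    have hδ1 : min (c / (2 * (ℓ3 + M + 1))) (min ((1 - α)/2) (1/2)) ≤ c / (2 * (ℓ3 + M + 1)) :=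
      min_le_left _ _
    have hδ2 : min (c / (2 * (ℓ3 + M + 1))) (min ((1 - α)/2) (1/2)) ≤ (1 - α)/2 :=
      le_trans (min_le_right _ _) (min_le_left _ _)
    have hδ3 : min (c / (2 * (ℓ3 + M + 1))) (min ((1 - α)/2) (1/2)) ≤ 1/2 :=
      le_trans (min_le_right _ _) (min_le_right _ _)
    have hw21 : w2 < 1 := by linarith
    have hw3pos : 0 < w3 := by linarith
    have hδc : c / (2 * (ℓ3 + M + 1)) * (2 * (ℓ3 + M + 1)) = c := by
      field_simp
    -- key inequality
    have hkey : 0 < ℓ3 * (1 - α - w2) + (ℓ1 - ℓ2) * w3 := by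
      nlinarith [mul_pos h3 hw20, mul_lt_mul_of_pos_left hw2δ h3,
        mul_le_mul_of_nonneg_right hδ1 (le_of_lt h3)]
    have hD : 0 < ℓ3 * (1 - w2) * w2 + ℓ2 * (1 - w2) * w3 + ℓ1 * w2 * w3 := by
      have : 0 < 1 - w2 := by linarith
      positivity
    rw [lt_sub_iff_add_lt, ← lt_sub_iff_add_lt', div_lt_iff₀ hD]
    nlinarith [mul_pos (mul_pos hw20 (show (0:ℝ) < 1 - w2 by linarith)) hkey]
end
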